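/- arXiv:2204.06612 — 10 statements merged into one kernel-verified Lean document; each statement's English description precedes it below -/
import Mathlib

section
/- Let α = (α₁,α₂,α₃) ∈ ℂ³ and β = (β₁,β₂,β₃) ∈ ℂ³ both satisfy the triangle inequality. Then there exists an automorphism φ of the tridisc 𝔻³, i.e. a bijective holomorphic map φ : 𝔻³ → 𝔻³ whose inverse is also holomorphic, such that φ(M_α) = M_β. -/
open Complex Set

/-- The open unit tridisc in `ℂ³`. -/
def triDisc : Set (ℂ × ℂ × ℂ) :=
  {z | ‖z.1‖ < 1 ∧ ‖z.2.1‖ < 1 ∧ ‖z.2.2‖ < 1}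

/-- The variety `M_α ⊆ 𝔻³`. -/
def Mvar (a : ℂ × ℂ × ℂ) : Set (ℂ × ℂ × ℂ) :=
  {z | z ∈ triDisc ∧
    a.1 * z.1 + a.2.1 * z.2.1 + a.2.2 * z.2.2 =
      (starRingEnd ℂ) a.1 * z.2.1 * z.2.2 + (starRingEnd ℂ) a.2.1 * z.1 * z.2.2 +
        (starRingEnd ℂ) a.2.2 * z.1 * z.2.1}

/-- A triple `α ∈ ℂ³` satisfies the triangle inequality. -/
def TriangleIneq (a : ℂ × ℂ × ℂ) : Prop :=
  ‖a.2.2‖ < ‖a.1‖ + ‖a.2.1‖ ∧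
  ‖a.1‖ < ‖a.2.1‖ + ‖a.2.2‖ ∧
  ‖a.2.1‖ < ‖a.1‖ + ‖a.2.2‖

noncomputable section

namespace MP

/-! ### Basic set-up -/

/-- The defining function of `Mvar`. -/
def Fp (a z : ℂ × ℂ × ℂ) : ℂ :=
  a.1 * z.1 + a.2.1 * z.2.1 + a.2.2 * z.2.2 -
    ((starRingEnd ℂ) a.1 * z.2.1 * z.2.2 + (starRingEnd ℂ) a.2.1 * z.1 * z.2.2 +
      (starRingEnd ℂ) a.2.2 * z.1 * z.2.1)

lemma mem_Mvar {a z : ℂ × ℂ × ℂ} : z ∈ Mvar a ↔ z ∈ triDisc ∧ Fp a z = 0 := by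
  unfold Mvar Fp
  simp only [Set.mem_setOf_eq, sub_eq_zero]

def IsEquiv (φ ψ : ℂ × ℂ × ℂ → ℂ × ℂ × ℂ) (A B : Set (ℂ × ℂ × ℂ)) : Prop :=
  DifferentiableOn ℂ φ triDisc ∧ DifferentiableOn ℂ ψ triDisc ∧
  Set.MapsTo φ triDisc triDisc ∧ Set.MapsTo ψ triDisc triDisc ∧
  (∀ z ∈ triDisc, ψ (φ z) = z) ∧ (∀ z ∈ triDisc, φ (ψ z) = z) ∧
  φ '' A = B

lemma Mvar_subset (a : ℂ × ℂ × ℂ) : Mvar a ⊆ triDisc := fun _ hz => hz.1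

lemma IsEquiv.symm {φ ψ : ℂ × ℂ × ℂ → ℂ × ℂ × ℂ} {A B : Set (ℂ × ℂ × ℂ)}
    (hA : A ⊆ triDisc) (h : IsEquiv φ ψ A B) : IsEquiv ψ φ B A := by
  obtain ⟨d1, d2, m1, m2, i1, i2, himg⟩ := h
  refine ⟨d2, d1, m2, m1, i2, i1, ?_⟩
  ext x
  constructor
  · rintro ⟨b, hb, rfl⟩
    rw [← himg] at hb
    obtain ⟨a, ha, rfl⟩ := hb
    rw [i1 a (hA ha)]; exact ha
  · intro hx
    exact ⟨φ x, himg ▸ ⟨x, hx, rfl⟩, i1 x (hA hx)⟩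

lemma IsEquiv.trans {φ ψ φ' ψ' : ℂ × ℂ × ℂ → ℂ × ℂ × ℂ} {A B C : Set (ℂ × ℂ × ℂ)}
    (h : IsEquiv φ ψ A B) (h' : IsEquiv φ' ψ' B C) : IsEquiv (φ' ∘ φ) (ψ ∘ ψ') A C := by
  obtain ⟨d1, d2, m1, m2, i1, i2, himg⟩ := h
  obtain ⟨d1', d2', m1', m2', i1', i2', himg'⟩ := h'
  refine ⟨d1'.comp d1 m1, d2.comp d2' m2', m1'.comp m1, m2.comp m2', ?_, ?_, ?_⟩
  · intro z hz
    simp only [Function.comp_apply]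
    rw [i1' (φ z) (m1 hz), i1 z hz]
  · intro z hz
    simp only [Function.comp_apply]
    rw [i2 (ψ' z) (m2' hz), i2' z hz]
  · rw [Set.image_comp, himg, himg']

lemma image_Mvar {φ ψ : ℂ × ℂ × ℂ → ℂ × ℂ × ℂ}
    (m1 : Set.MapsTo φ triDisc triDisc) (m2 : Set.MapsTo ψ triDisc triDisc)
    (i2 : ∀ w ∈ triDisc, φ (ψ w) = w) {a b : ℂ × ℂ × ℂ}
    (hfwd : ∀ z ∈ triDisc, Fp a z = 0 → Fp b (φ z) = 0)
    (hbwd : ∀ w ∈ triDisc, Fp b w = 0 → Fp a (ψ w) = 0) :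
    φ '' Mvar a = Mvar b := by
  ext w
  constructor
  · rintro ⟨z, hz, rfl⟩
    rw [mem_Mvar] at hz ⊢
    exact ⟨m1 hz.1, hfwd z hz.1 hz.2⟩
  · intro hw
    rw [mem_Mvar] at hw
    refine ⟨ψ w, ?_, i2 w hw.1⟩
    rw [mem_Mvar]
    exact ⟨m2 hw.1, hbwd w hw.1 hw.2⟩

/-! ### Blaschke factors -/

def bl (a : ℝ) (z : ℂ) : ℂ := (z - a) / (1 - a * z)

lemma bl_denom_ne {a : ℝ} (ha : |a| < 1) {z : ℂ} (hz : ‖z‖ < 1) :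
    (1 : ℂ) - (a : ℂ) * z ≠ 0 := by
  intro h
  have h1 : (a : ℂ) * z = 1 := by linear_combination -h
  have h2 : ‖((a : ℂ) * z)‖ = 1 := by rw [h1]; simp
  rw [norm_mul, Complex.norm_real, Real.norm_eq_abs] at h2
  nlinarith [norm_nonneg z, abs_nonneg a]

lemma bl_abs_lt {a : ℝ} (ha : |a| < 1) {z : ℂ} (hz : ‖z‖ < 1) :
    ‖(bl a z)‖ < 1 := by
  have hd := bl_denom_ne ha hz
  have hdpos : 0 < ‖(1 - (a : ℂ) * z)‖ := by
    simpa [norm_pos_iff] using hd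
  rw [bl, norm_div, div_lt_one hdpos]
  have hns : Complex.normSq (z - (a : ℂ)) < Complex.normSq (1 - (a : ℂ) * z) := by
    have ha2 : a ^ 2 < 1 := by nlinarith [abs_nonneg a, (abs_lt.mp ha).1, (abs_lt.mp ha).2]
    have hz2 : z.re ^ 2 + z.im ^ 2 < 1 := by
      have h := Complex.sq_norm z
      rw [Complex.normSq_apply] at h
      nlinarith [norm_nonneg z]
    simp only [Complex.normSq_apply, Complex.sub_re, Complex.sub_im, Complex.mul_re,
      Complex.mul_im, Complex.ofReal_re, Complex.ofReal_im, Complex.one_re, Complex.one_im]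
    nlinarith [mul_pos (sub_pos.mpr ha2) (sub_pos.mpr hz2)]
  have := Real.sqrt_lt_sqrt (Complex.normSq_nonneg _) hns
  simpa [Complex.norm_def] using this

lemma bl_inv {a : ℝ} (ha : |a| < 1) {z : ℂ} (hz : ‖z‖ < 1) :
    bl (-a) (bl a z) = z := by
  have hd := bl_denom_ne ha hz
  have ha2 : (1 : ℂ) - (a : ℂ) ^ 2 ≠ 0 := by
    intro h
    have : ((1 - a ^ 2 : ℝ) : ℂ) = 0 := by push_cast; linear_combination h
    have h2 : (1 - a ^ 2 : ℝ) = 0 := by exact_mod_cast this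
    nlinarith [(abs_lt.mp ha).1, (abs_lt.mp ha).2]
  have hd2 : (1 : ℂ) - ((-a : ℝ) : ℂ) * bl a z ≠ 0 := by
    have hcalc : (1 : ℂ) - ((-a : ℝ) : ℂ) * bl a z = (1 - (a : ℂ) ^ 2) / (1 - (a : ℂ) * z) := by
      rw [bl]; push_cast; field_simp; ring
    rw [hcalc]
    exact div_ne_zero ha2 hd
  rw [bl, div_eq_iff hd2, bl]
  push_cast
  have hd' : (1 : ℂ) - z * (a : ℂ) ≠ 0 := by rwa [mul_comm]
  field_simp
  ring

lemma bl_inv' {a : ℝ} (ha : |a| < 1) {z : ℂ} (hz : ‖z‖ < 1) :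
    bl a (bl (-a) z) = z := by
  have := bl_inv (a := -a) (by rwa [abs_neg]) hz
  rwa [neg_neg] at this

/-! ### Coefficient identities -/

section Coeffs
variable {s1 s2 s3 l : ℝ}

lemma hD_ne (hs1 : 0 < s1) (hs2 : 0 < s2) (hs3 : 0 < s3) (hl : 0 < l) :
    (s1 + l) * ((s2 + l) * (s3 + l)) ≠ 0 := by positivity

lemma coeff_C0 (hs1 : 0 < s1) (hs2 : 0 < s2) (hs3 : 0 < s3) (hl0 : 0 < l)
    (hl : l ^ 2 * (s1 + s2 + s3) = 3 * (s1 * s2 * s3)) :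
    (s1 - l)/(s1 + l) + (s2 - l)/(s2 + l) + (s3 - l)/(s3 + l)
      + ((s1 - l)/(s1 + l)) * ((s2 - l)/(s2 + l))
      + ((s1 - l)/(s1 + l)) * ((s3 - l)/(s3 + l))
      + ((s2 - l)/(s2 + l)) * ((s3 - l)/(s3 + l)) = 0 := by
  have hD := hD_ne hs1 hs2 hs3 hl0
  apply mul_right_cancel₀ hD
  have key : ((s1 - l)/(s1 + l) + (s2 - l)/(s2 + l) + (s3 - l)/(s3 + l)
      + ((s1 - l)/(s1 + l)) * ((s2 - l)/(s2 + l))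
      + ((s1 - l)/(s1 + l)) * ((s3 - l)/(s3 + l))
      + ((s2 - l)/(s2 + l)) * ((s3 - l)/(s3 + l))) * ((s1 + l) * ((s2 + l) * (s3 + l)))
      = (s1 - l) * ((s2 + l) * (s3 + l)) + (s2 - l) * ((s1 + l) * (s3 + l))
      + (s3 - l) * ((s1 + l) * (s2 + l)) + (s1 - l) * (s2 - l) * (s3 + l)
      + (s1 - l) * (s3 - l) * (s2 + l) + (s2 - l) * (s3 - l) * (s1 + l) := by
    field_simp
  rw [key, zero_mul]
  linear_combination (-2 : ℝ) * hl

lemma coeff_C1 (hs1 : 0 < s1) (hs2 : 0 < s2) (hs3 : 0 < s3) (hl0 : 0 < l)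
    (hl : l ^ 2 * (s1 + s2 + s3) = 3 * (s1 * s2 * s3)) :
    1 + ((s1 - l)/(s1 + l)) * ((s2 - l)/(s2 + l)) * ((s3 - l)/(s3 + l))
      + ((s1 - l)/(s1 + l)) * ((s2 - l)/(s2 + l))
      + ((s1 - l)/(s1 + l)) * ((s3 - l)/(s3 + l))
      + (s2 - l)/(s2 + l) + (s3 - l)/(s3 + l)
    = (8 * l ^ 2 / ((s1 + l) * ((s2 + l) * (s3 + l)))) * ((s2 + s3) / 2) := by
  have hD := hD_ne hs1 hs2 hs3 hl0
  apply mul_right_cancel₀ hD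
  have key1 : (1 + ((s1 - l)/(s1 + l)) * ((s2 - l)/(s2 + l)) * ((s3 - l)/(s3 + l))
      + ((s1 - l)/(s1 + l)) * ((s2 - l)/(s2 + l))
      + ((s1 - l)/(s1 + l)) * ((s3 - l)/(s3 + l))
      + (s2 - l)/(s2 + l) + (s3 - l)/(s3 + l)) * ((s1 + l) * ((s2 + l) * (s3 + l)))
      = (s1 + l) * ((s2 + l) * (s3 + l)) + (s1 - l) * (s2 - l) * (s3 - l)
      + (s1 - l) * (s2 - l) * (s3 + l) + (s1 - l) * (s3 - l) * (s2 + l)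
      + (s2 - l) * ((s1 + l) * (s3 + l)) + (s3 - l) * ((s1 + l) * (s2 + l)) := by
    field_simp
  have key2 : (8 * l ^ 2 / ((s1 + l) * ((s2 + l) * (s3 + l)))) * ((s2 + s3) / 2)
      * ((s1 + l) * ((s2 + l) * (s3 + l))) = 4 * l ^ 2 * (s2 + s3) := by
    field_simp
    ring
  rw [key1, key2]
  linear_combination (-2 : ℝ) * hl

end Coeffs

/-! ### The main polynomial identity -/

lemma poly_id {A1 A2 A3 R1 R2 R3 T : ℝ}
    (hC0 : A1 + A2 + A3 + A1*A2 + A1*A3 + A2*A3 = 0)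
    (hC1 : 1 + A1*A2*A3 + A1*A2 + A1*A3 + A2 + A3 = T*R1)
    (hC2 : 1 + A1*A2*A3 + A1*A2 + A2*A3 + A1 + A3 = T*R2)
    (hC3 : 1 + A1*A2*A3 + A1*A3 + A2*A3 + A1 + A2 = T*R3)
    (z1 z2 z3 : ℂ) :
    ((z1 - (A1:ℂ)) * ((1 - A2*z2) * (1 - A3*z3)) + (z2 - (A2:ℂ)) * ((1 - A1*z1) * (1 - A3*z3))
      + (z3 - (A3:ℂ)) * ((1 - A1*z1) * (1 - A2*z2)))
    - ((z2 - (A2:ℂ)) * (z3 - (A3:ℂ)) * (1 - A1*z1) + (z1 - (A1:ℂ)) * (z3 - (A3:ℂ)) * (1 - A2*z2)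
      + (z1 - (A1:ℂ)) * (z2 - (A2:ℂ)) * (1 - A3*z3))
    = (T:ℂ) * (((R1:ℂ)*z1 + (R2:ℂ)*z2 + (R3:ℂ)*z3)
        - ((R1:ℂ)*z2*z3 + (R2:ℂ)*z1*z3 + (R3:ℂ)*z1*z2)) := by
  have c0 := congrArg (Complex.ofReal) hC0
  have c1 := congrArg (Complex.ofReal) hC1
  have c2 := congrArg (Complex.ofReal) hC2
  have c3 := congrArg (Complex.ofReal) hC3
  push_cast at c0 c1 c2 c3
  linear_combination (z1*z2*z3 - 1) * c0 + (z1 - z2*z3) * c1 + (z2 - z1*z3) * c2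
    + (z3 - z1*z2) * c3

lemma bl_clear {A1 A2 A3 : ℝ} {z1 z2 z3 : ℂ}
    (h1 : (1:ℂ) - A1*z1 ≠ 0) (h2 : (1:ℂ) - A2*z2 ≠ 0) (h3 : (1:ℂ) - A3*z3 ≠ 0) :
    (bl A1 z1 + bl A2 z2 + bl A3 z3
      - (bl A2 z2 * bl A3 z3 + bl A1 z1 * bl A3 z3 + bl A1 z1 * bl A2 z2))
      * ((1 - A1*z1) * ((1 - A2*z2) * (1 - A3*z3)))
    = ((z1 - (A1:ℂ)) * ((1 - A2*z2) * (1 - A3*z3)) + (z2 - (A2:ℂ)) * ((1 - A1*z1) * (1 - A3*z3))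
      + (z3 - (A3:ℂ)) * ((1 - A1*z1) * (1 - A2*z2)))
    - ((z2 - (A2:ℂ)) * (z3 - (A3:ℂ)) * (1 - A1*z1) + (z1 - (A1:ℂ)) * (z3 - (A3:ℂ)) * (1 - A2*z2)
      + (z1 - (A1:ℂ)) * (z2 - (A2:ℂ)) * (1 - A3*z3)) := by
  have hu1 : bl A1 z1 * (1 - (A1:ℂ)*z1) = z1 - A1 := by
    rw [bl]; exact div_mul_cancel₀ _ h1
  have hu2 : bl A2 z2 * (1 - (A2:ℂ)*z2) = z2 - A2 := by
    rw [bl]; exact div_mul_cancel₀ _ h2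
  have hu3 : bl A3 z3 * (1 - (A3:ℂ)*z3) = z3 - A3 := by
    rw [bl]; exact div_mul_cancel₀ _ h3
  linear_combination
    ((1 - (A2:ℂ)*z2)*(1 - (A3:ℂ)*z3) - (bl A3 z3*(1 - (A3:ℂ)*z3))*(1 - (A2:ℂ)*z2)
      - (bl A2 z2*(1 - (A2:ℂ)*z2))*(1 - (A3:ℂ)*z3)) * hu1
    + ((1 - (A1:ℂ)*z1)*(1 - (A3:ℂ)*z3) - (bl A3 z3*(1 - (A3:ℂ)*z3))*(1 - (A1:ℂ)*z1)
      - (z1 - (A1:ℂ))*(1 - (A3:ℂ)*z3)) * hu2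
    + ((1 - (A1:ℂ)*z1)*(1 - (A2:ℂ)*z2) - (z2 - (A2:ℂ))*(1 - (A1:ℂ)*z1)
      - (z1 - (A1:ℂ))*(1 - (A2:ℂ)*z2)) * hu3

/-! ### Möbius maps in each coordinate -/

def mob3 (A1 A2 A3 : ℝ) (z : ℂ × ℂ × ℂ) : ℂ × ℂ × ℂ :=
  (bl A1 z.1, bl A2 z.2.1, bl A3 z.2.2)

lemma mob3_diff {A1 A2 A3 : ℝ} (h1 : |A1| < 1) (h2 : |A2| < 1) (h3 : |A3| < 1) :
    DifferentiableOn ℂ (mob3 A1 A2 A3) triDisc := by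
  have d1 : DifferentiableOn ℂ (fun z : ℂ × ℂ × ℂ => z.1) triDisc :=
    differentiable_fst.differentiableOn
  have d2 : DifferentiableOn ℂ (fun z : ℂ × ℂ × ℂ => z.2.1) triDisc :=
    (differentiable_fst.comp differentiable_snd).differentiableOn
  have d3 : DifferentiableOn ℂ (fun z : ℂ × ℂ × ℂ => z.2.2) triDisc :=
    (differentiable_snd.comp differentiable_snd).differentiableOn
  have comp : ∀ (A : ℝ), |A| < 1 → ∀ f : ℂ × ℂ × ℂ → ℂ, DifferentiableOn ℂ f triDisc →
      (∀ z ∈ triDisc, ‖(f z)‖ < 1) →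
      DifferentiableOn ℂ (fun z => bl A (f z)) triDisc := by
    intro A hA f hf habs
    simp only [bl, div_eq_mul_inv]
    exact (hf.sub_const _).mul
      ((((differentiableOn_const _).mul hf).const_sub _).inv
        fun z hz => bl_denom_ne hA (habs z hz))
  exact DifferentiableOn.prodMk
    (comp A1 h1 _ d1 fun z hz => hz.1)
    (DifferentiableOn.prodMk
      (comp A2 h2 _ d2 fun z hz => hz.2.1)
      (comp A3 h3 _ d3 fun z hz => hz.2.2))

lemma mob3_maps {A1 A2 A3 : ℝ} (h1 : |A1| < 1) (h2 : |A2| < 1) (h3 : |A3| < 1) :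
    Set.MapsTo (mob3 A1 A2 A3) triDisc triDisc := fun _ hz =>
  ⟨bl_abs_lt h1 hz.1, bl_abs_lt h2 hz.2.1, bl_abs_lt h3 hz.2.2⟩

lemma mob3_inv {A1 A2 A3 : ℝ} (h1 : |A1| < 1) (h2 : |A2| < 1) (h3 : |A3| < 1) :
    ∀ z ∈ triDisc, mob3 (-A1) (-A2) (-A3) (mob3 A1 A2 A3 z) = z := by
  intro z hz
  simp only [mob3]
  exact Prod.ext (bl_inv h1 hz.1) (Prod.ext (bl_inv h2 hz.2.1) (bl_inv h3 hz.2.2))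

lemma mob3_inv' {A1 A2 A3 : ℝ} (h1 : |A1| < 1) (h2 : |A2| < 1) (h3 : |A3| < 1) :
    ∀ z ∈ triDisc, mob3 A1 A2 A3 (mob3 (-A1) (-A2) (-A3) z) = z := by
  intro z hz
  simp only [mob3]
  exact Prod.ext (bl_inv' h1 hz.1) (Prod.ext (bl_inv' h2 hz.2.1) (bl_inv' h3 hz.2.2))

/-! ### Step 2: from a real positive triangle to (1,1,1) -/

lemma abs_frac_lt_one {s l : ℝ} (hs : 0 < s) (hl : 0 < l) : |(s - l)/(s + l)| < 1 := by
  rw [abs_div, abs_of_pos (by linarith : (0:ℝ) < s + l), div_lt_one (by linarith)]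
  rw [abs_lt]
  constructor <;> linarith

lemma Fp_real (R1 R2 R3 : ℝ) (z : ℂ × ℂ × ℂ) :
    Fp ((R1:ℂ), (R2:ℂ), (R3:ℂ)) z
      = (((R1:ℂ)*z.1 + (R2:ℂ)*z.2.1 + (R3:ℂ)*z.2.2)
        - ((R1:ℂ)*z.2.1*z.2.2 + (R2:ℂ)*z.1*z.2.2 + (R3:ℂ)*z.1*z.2.1)) := by
  simp only [Fp, Complex.conj_ofReal]

lemma Fp_one (w : ℂ × ℂ × ℂ) :
    Fp (1, 1, 1) w
      = (w.1 + w.2.1 + w.2.2) - (w.2.1*w.2.2 + w.1*w.2.2 + w.1*w.2.1) := by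
  simp only [Fp, map_one, one_mul]

lemma step2' (s1 s2 s3 l : ℝ) (hs1 : 0 < s1) (hs2 : 0 < s2) (hs3 : 0 < s3) (hl0 : 0 < l)
    (hl : l ^ 2 * (s1 + s2 + s3) = 3 * (s1 * s2 * s3)) :
    ∃ φ ψ, IsEquiv φ ψ
      (Mvar ((((s2 + s3)/2 : ℝ) : ℂ), (((s1 + s3)/2 : ℝ) : ℂ), (((s1 + s2)/2 : ℝ) : ℂ)))
      (Mvar (1, 1, 1)) := by
  have habs1 := abs_frac_lt_one hs1 hl0
  have habs2 := abs_frac_lt_one hs2 hl0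
  have habs3 := abs_frac_lt_one hs3 hl0
  have habs1' : |-((s1 - l)/(s1 + l))| < 1 := by rwa [abs_neg]
  have habs2' : |-((s2 - l)/(s2 + l))| < 1 := by rwa [abs_neg]
  have habs3' : |-((s3 - l)/(s3 + l))| < 1 := by rwa [abs_neg]
  have hC0 := coeff_C0 hs1 hs2 hs3 hl0 hl
  have hC1 := coeff_C1 hs1 hs2 hs3 hl0 hl
  have hC2 : 1 + ((s1 - l)/(s1 + l)) * ((s2 - l)/(s2 + l)) * ((s3 - l)/(s3 + l))
      + ((s1 - l)/(s1 + l)) * ((s2 - l)/(s2 + l))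
      + ((s2 - l)/(s2 + l)) * ((s3 - l)/(s3 + l))
      + (s1 - l)/(s1 + l) + (s3 - l)/(s3 + l)
      = (8 * l ^ 2 / ((s1 + l) * ((s2 + l) * (s3 + l)))) * ((s1 + s3) / 2) := by
    have h := coeff_C1 hs2 hs1 hs3 hl0 (by linear_combination hl)
    linear_combination h
  have hC3 : 1 + ((s1 - l)/(s1 + l)) * ((s2 - l)/(s2 + l)) * ((s3 - l)/(s3 + l))
      + ((s1 - l)/(s1 + l)) * ((s3 - l)/(s3 + l))
      + ((s2 - l)/(s2 + l)) * ((s3 - l)/(s3 + l))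
      + (s1 - l)/(s1 + l) + (s2 - l)/(s2 + l)
      = (8 * l ^ 2 / ((s1 + l) * ((s2 + l) * (s3 + l)))) * ((s1 + s2) / 2) := by
    have h := coeff_C1 hs3 hs1 hs2 hl0 (by linear_combination hl)
    linear_combination h
  have hTpos : 0 < 8 * l ^ 2 / ((s1 + l) * ((s2 + l) * (s3 + l))) := by positivity
  have hTne : ((8 * l ^ 2 / ((s1 + l) * ((s2 + l) * (s3 + l))) : ℝ) : ℂ) ≠ 0 := by
    exact_mod_cast ne_of_gt hTpos
  -- the key identity, for z in the tridisc
  have key : ∀ z : ℂ × ℂ × ℂ, z ∈ triDisc →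
      (bl ((s1 - l)/(s1 + l)) z.1 + bl ((s2 - l)/(s2 + l)) z.2.1 + bl ((s3 - l)/(s3 + l)) z.2.2
        - (bl ((s2 - l)/(s2 + l)) z.2.1 * bl ((s3 - l)/(s3 + l)) z.2.2
          + bl ((s1 - l)/(s1 + l)) z.1 * bl ((s3 - l)/(s3 + l)) z.2.2
          + bl ((s1 - l)/(s1 + l)) z.1 * bl ((s2 - l)/(s2 + l)) z.2.1))
        * ((1 - (((s1 - l)/(s1 + l) : ℝ) : ℂ)*z.1) * ((1 - (((s2 - l)/(s2 + l) : ℝ) : ℂ)*z.2.1)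
            * (1 - (((s3 - l)/(s3 + l) : ℝ) : ℂ)*z.2.2)))
      = ((8 * l ^ 2 / ((s1 + l) * ((s2 + l) * (s3 + l))) : ℝ) : ℂ)
          * Fp ((((s2 + s3)/2 : ℝ) : ℂ), (((s1 + s3)/2 : ℝ) : ℂ), (((s1 + s2)/2 : ℝ) : ℂ)) z := by
    intro z hz
    have hd1 := bl_denom_ne habs1 hz.1
    have hd2 := bl_denom_ne habs2 hz.2.1
    have hd3 := bl_denom_ne habs3 hz.2.2
    rw [Fp_real]
    exact (bl_clear hd1 hd2 hd3).trans (poly_id hC0 hC1 hC2 hC3 z.1 z.2.1 z.2.2)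
  refine ⟨mob3 ((s1 - l)/(s1 + l)) ((s2 - l)/(s2 + l)) ((s3 - l)/(s3 + l)),
    mob3 (-((s1 - l)/(s1 + l))) (-((s2 - l)/(s2 + l))) (-((s3 - l)/(s3 + l))),
    mob3_diff habs1 habs2 habs3, mob3_diff habs1' habs2' habs3',
    mob3_maps habs1 habs2 habs3, mob3_maps habs1' habs2' habs3',
    mob3_inv habs1 habs2 habs3, mob3_inv' habs1 habs2 habs3, ?_⟩
  apply image_Mvar (mob3_maps habs1 habs2 habs3) (mob3_maps habs1' habs2' habs3')
    (mob3_inv' habs1 habs2 habs3)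
  · -- forward
    intro z hz hF
    have hk := key z hz
    rw [hF, mul_zero] at hk
    have hd1 := bl_denom_ne habs1 hz.1
    have hd2 := bl_denom_ne habs2 hz.2.1
    have hd3 := bl_denom_ne habs3 hz.2.2
    have hfac := (mul_eq_zero.mp hk).resolve_right (mul_ne_zero hd1 (mul_ne_zero hd2 hd3))
    rw [Fp_one]
    simpa [mob3] using hfac
  · -- backward
    intro w hw hF
    set z := mob3 (-((s1 - l)/(s1 + l))) (-((s2 - l)/(s2 + l))) (-((s3 - l)/(s3 + l))) w with hzdef
    have hz : z ∈ triDisc := mob3_maps habs1' habs2' habs3' hw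
    have hk := key z hz
    have hback : mob3 ((s1 - l)/(s1 + l)) ((s2 - l)/(s2 + l)) ((s3 - l)/(s3 + l)) z = w :=
      mob3_inv' habs1 habs2 habs3 w hw
    have hfac : (bl ((s1 - l)/(s1 + l)) z.1 + bl ((s2 - l)/(s2 + l)) z.2.1
        + bl ((s3 - l)/(s3 + l)) z.2.2
        - (bl ((s2 - l)/(s2 + l)) z.2.1 * bl ((s3 - l)/(s3 + l)) z.2.2
          + bl ((s1 - l)/(s1 + l)) z.1 * bl ((s3 - l)/(s3 + l)) z.2.2
          + bl ((s1 - l)/(s1 + l)) z.1 * bl ((s2 - l)/(s2 + l)) z.2.1)) = 0 := by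
      have hw1 : bl ((s1 - l)/(s1 + l)) z.1 = w.1 := congrArg Prod.fst hback
      have hw2 : bl ((s2 - l)/(s2 + l)) z.2.1 = w.2.1 := congrArg (Prod.fst ∘ Prod.snd) hback
      have hw3 : bl ((s3 - l)/(s3 + l)) z.2.2 = w.2.2 := congrArg (Prod.snd ∘ Prod.snd) hback
      rw [hw1, hw2, hw3]
      rw [Fp_one] at hF
      linear_combination hF
    rw [hfac, zero_mul] at hk
    exact (mul_eq_zero.mp hk.symm).resolve_left hTne

lemma step2 (r1 r2 r3 : ℝ) (t1 : r1 < r2 + r3) (t2 : r2 < r1 + r3) (t3 : r3 < r1 + r2) :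
    ∃ φ ψ, IsEquiv φ ψ (Mvar ((r1:ℂ), (r2:ℂ), (r3:ℂ))) (Mvar (1, 1, 1)) := by
  have hs1 : 0 < r2 + r3 - r1 := by linarith
  have hs2 : 0 < r1 + r3 - r2 := by linarith
  have hs3 : 0 < r1 + r2 - r3 := by linarith
  have hsum : 0 < r1 + r2 + r3 := by linarith
  set l := Real.sqrt (3 * ((r2 + r3 - r1) * (r1 + r3 - r2) * (r1 + r2 - r3)) / (r1 + r2 + r3))
    with hldef
  have harg : 0 < 3 * ((r2 + r3 - r1) * (r1 + r3 - r2) * (r1 + r2 - r3)) / (r1 + r2 + r3) := by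
    apply div_pos _ hsum
    have := mul_pos (mul_pos hs1 hs2) hs3
    linarith
  have hl0 : 0 < l := Real.sqrt_pos.mpr harg
  have hl : l ^ 2 * ((r2 + r3 - r1) + (r1 + r3 - r2) + (r1 + r2 - r3))
      = 3 * ((r2 + r3 - r1) * (r1 + r3 - r2) * (r1 + r2 - r3)) := by
    have hsq : l ^ 2 = 3 * ((r2 + r3 - r1) * (r1 + r3 - r2) * (r1 + r2 - r3)) / (r1 + r2 + r3) :=
      Real.sq_sqrt (le_of_lt harg)
    rw [hsq]
    have he : (r2 + r3 - r1) + (r1 + r3 - r2) + (r1 + r2 - r3) = r1 + r2 + r3 := by ring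
    rw [he, div_mul_cancel₀ _ (ne_of_gt hsum)]
  obtain ⟨φ, ψ, h⟩ := step2' (r2 + r3 - r1) (r1 + r3 - r2) (r1 + r2 - r3) l hs1 hs2 hs3 hl0 hl
  have e1 : ((r1 + r3 - r2) + (r1 + r2 - r3)) / 2 = r1 := by ring
  have e2 : ((r2 + r3 - r1) + (r1 + r2 - r3)) / 2 = r2 := by ring
  have e3 : ((r2 + r3 - r1) + (r1 + r3 - r2)) / 2 = r3 := by ring
  rw [e1, e2, e3] at h
  exact ⟨φ, ψ, h⟩

/-! ### Step 1: rotations -/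

def rot3 (w1 w2 w3 : ℂ) (z : ℂ × ℂ × ℂ) : ℂ × ℂ × ℂ := (w1 * z.1, w2 * z.2.1, w3 * z.2.2)

lemma rot3_diff (w1 w2 w3 : ℂ) : DifferentiableOn ℂ (rot3 w1 w2 w3) triDisc := by
  apply DifferentiableOn.prodMk
  · exact ((differentiable_const _).mul differentiable_fst).differentiableOn
  apply DifferentiableOn.prodMk
  · exact ((differentiable_const _).mul
      (differentiable_fst.comp differentiable_snd)).differentiableOn
  · exact ((differentiable_const _).mul
      (differentiable_snd.comp differentiable_snd)).differentiableOn

lemma rot3_maps {w1 w2 w3 : ℂ} (h1 : ‖w1‖ = 1) (h2 : ‖w2‖ = 1)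
    (h3 : ‖w3‖ = 1) : Set.MapsTo (rot3 w1 w2 w3) triDisc triDisc := by
  intro z hz
  refine ⟨?_, ?_, ?_⟩
  · show ‖(w1 * z.1)‖ < 1
    rw [norm_mul, h1, one_mul]; exact hz.1
  · show ‖(w2 * z.2.1)‖ < 1
    rw [norm_mul, h2, one_mul]; exact hz.2.1
  · show ‖(w3 * z.2.2)‖ < 1
    rw [norm_mul, h3, one_mul]; exact hz.2.2

lemma conj_mul_self {w : ℂ} (h : ‖w‖ = 1) : (starRingEnd ℂ) w * w = 1 := by
  rw [mul_comm, Complex.mul_conj, Complex.normSq_eq_norm_sq, h]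
  norm_num

lemma rot3_inv {w1 w2 w3 : ℂ} (h1 : ‖w1‖ = 1) (h2 : ‖w2‖ = 1)
    (h3 : ‖w3‖ = 1) (z : ℂ × ℂ × ℂ) :
    rot3 ((starRingEnd ℂ) w1) ((starRingEnd ℂ) w2) ((starRingEnd ℂ) w3) (rot3 w1 w2 w3 z) = z := by
  simp only [rot3]
  refine Prod.ext ?_ (Prod.ext ?_ ?_)
  · show (starRingEnd ℂ) w1 * (w1 * z.1) = z.1
    rw [← mul_assoc, conj_mul_self h1, one_mul]
  · show (starRingEnd ℂ) w2 * (w2 * z.2.1) = z.2.1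
    rw [← mul_assoc, conj_mul_self h2, one_mul]
  · show (starRingEnd ℂ) w3 * (w3 * z.2.2) = z.2.2
    rw [← mul_assoc, conj_mul_self h3, one_mul]

lemma rot3_inv' {w1 w2 w3 : ℂ} (h1 : ‖w1‖ = 1) (h2 : ‖w2‖ = 1)
    (h3 : ‖w3‖ = 1) (z : ℂ × ℂ × ℂ) :
    rot3 w1 w2 w3 (rot3 ((starRingEnd ℂ) w1) ((starRingEnd ℂ) w2) ((starRingEnd ℂ) w3) z) = z := by
  simp only [rot3]
  refine Prod.ext ?_ (Prod.ext ?_ ?_)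
  · show w1 * ((starRingEnd ℂ) w1 * z.1) = z.1
    rw [← mul_assoc, mul_comm w1, conj_mul_self h1, one_mul]
  · show w2 * ((starRingEnd ℂ) w2 * z.2.1) = z.2.1
    rw [← mul_assoc, mul_comm w2, conj_mul_self h2, one_mul]
  · show w3 * ((starRingEnd ℂ) w3 * z.2.2) = z.2.2
    rw [← mul_assoc, mul_comm w3, conj_mul_self h3, one_mul]

lemma step1 (α : ℂ × ℂ × ℂ) (hα : TriangleIneq α) :
    ∃ φ ψ, IsEquiv φ ψ (Mvar α)
      (Mvar ((‖α.1‖ : ℂ), (‖α.2.1‖ : ℂ), (‖α.2.2‖ : ℂ))) := by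
  obtain ⟨ta, tb, tc⟩ := hα
  have h1 : α.1 ≠ 0 := by
    intro h; rw [h] at ta tc; simp only [norm_zero, zero_add] at ta tc; linarith
  have h2 : α.2.1 ≠ 0 := by
    intro h; rw [h] at ta tb; simp only [norm_zero, zero_add, add_zero] at ta tb; linarith
  have h3 : α.2.2 ≠ 0 := by
    intro h; rw [h] at tb tc; simp only [norm_zero, zero_add, add_zero] at tb tc; linarith
  have hr1 : 0 < ‖α.1‖ := norm_pos_iff.mpr h1
  have hr2 : 0 < ‖α.2.1‖ := norm_pos_iff.mpr h2
  have hr3 : 0 < ‖α.2.2‖ := norm_pos_iff.mpr h3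
  have hr1c : ((‖α.1‖ : ℝ) : ℂ) ≠ 0 := by exact_mod_cast ne_of_gt hr1
  have hr2c : ((‖α.2.1‖ : ℝ) : ℂ) ≠ 0 := by exact_mod_cast ne_of_gt hr2
  have hr3c : ((‖α.2.2‖ : ℝ) : ℂ) ≠ 0 := by exact_mod_cast ne_of_gt hr3
  obtain ⟨κ, hκdef⟩ : ∃ x : ℂ, x = (starRingEnd ℂ) α.1 * (‖α.2.1‖ : ℂ)
      * (‖α.2.2‖ : ℂ) / (α.2.1 * α.2.2 * (‖α.1‖ : ℂ)) := ⟨_, rfl⟩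
  have hκ : ‖κ‖ = 1 := by
    rw [hκdef, norm_div, norm_mul, norm_mul, norm_mul, norm_mul, Complex.norm_conj,
      Complex.norm_real, Real.norm_eq_abs, Complex.norm_real, Real.norm_eq_abs, Complex.norm_real, Real.norm_eq_abs,
      _root_.abs_of_nonneg (norm_nonneg _), _root_.abs_of_nonneg (norm_nonneg _),
      _root_.abs_of_nonneg (norm_nonneg _), div_eq_one_iff_eq (by positivity)]
    ring
  have hκne : κ ≠ 0 := by
    intro h; rw [h] at hκ; simp at hκ
  obtain ⟨ω1, hω1def⟩ : ∃ x : ℂ, x = κ * α.1 / (‖α.1‖ : ℂ) := ⟨_, rfl⟩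
  obtain ⟨ω2, hω2def⟩ : ∃ x : ℂ, x = κ * α.2.1 / (‖α.2.1‖ : ℂ) := ⟨_, rfl⟩
  obtain ⟨ω3, hω3def⟩ : ∃ x : ℂ, x = κ * α.2.2 / (‖α.2.2‖ : ℂ) := ⟨_, rfl⟩
  have hωa1 : ‖ω1‖ = 1 := by
    rw [hω1def, norm_div, norm_mul, hκ, one_mul, Complex.norm_real, Real.norm_eq_abs,
      _root_.abs_of_nonneg (norm_nonneg _), div_self (ne_of_gt hr1)]
  have hωa2 : ‖ω2‖ = 1 := by
    rw [hω2def, norm_div, norm_mul, hκ, one_mul, Complex.norm_real, Real.norm_eq_abs,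
      _root_.abs_of_nonneg (norm_nonneg _), div_self (ne_of_gt hr2)]
  have hωa3 : ‖ω3‖ = 1 := by
    rw [hω3def, norm_div, norm_mul, hκ, one_mul, Complex.norm_real, Real.norm_eq_abs,
      _root_.abs_of_nonneg (norm_nonneg _), div_self (ne_of_gt hr3)]
  -- conjugate identities
  have hm1 : α.1 * (starRingEnd ℂ) α.1 = ((‖α.1‖ : ℝ) : ℂ) ^ 2 := by
    rw [Complex.mul_conj]
    norm_cast
    exact Complex.normSq_eq_norm_sq α.1
  have hm2 : α.2.1 * (starRingEnd ℂ) α.2.1 = ((‖α.2.1‖ : ℝ) : ℂ) ^ 2 := by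
    rw [Complex.mul_conj]
    norm_cast
    exact Complex.normSq_eq_norm_sq α.2.1
  have hm3 : α.2.2 * (starRingEnd ℂ) α.2.2 = ((‖α.2.2‖ : ℝ) : ℂ) ^ 2 := by
    rw [Complex.mul_conj]
    norm_cast
    exact Complex.normSq_eq_norm_sq α.2.2
  have hc1 : (starRingEnd ℂ) α.1 = ((‖α.1‖ : ℝ) : ℂ) ^ 2 / α.1 := by
    rw [eq_div_iff h1]; linear_combination hm1
  have hc2 : (starRingEnd ℂ) α.2.1 = ((‖α.2.1‖ : ℝ) : ℂ) ^ 2 / α.2.1 := by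
    rw [eq_div_iff h2]; linear_combination hm2
  have hc3 : (starRingEnd ℂ) α.2.2 = ((‖α.2.2‖ : ℝ) : ℂ) ^ 2 / α.2.2 := by
    rw [eq_div_iff h3]; linear_combination hm3
  -- the six coefficient relations
  have hA1 : ω1 * (‖α.1‖ : ℂ) = κ * α.1 := by
    rw [hω1def]; exact div_mul_cancel₀ _ hr1c
  have hA2 : ω2 * (‖α.2.1‖ : ℂ) = κ * α.2.1 := by
    rw [hω2def]; exact div_mul_cancel₀ _ hr2c
  have hA3 : ω3 * (‖α.2.2‖ : ℂ) = κ * α.2.2 := by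
    rw [hω3def]; exact div_mul_cancel₀ _ hr3c
  have hκm : κ * (α.2.1 * α.2.2 * (‖α.1‖ : ℂ))
      = (starRingEnd ℂ) α.1 * (‖α.2.1‖ : ℂ) * (‖α.2.2‖ : ℂ) := by
    rw [hκdef]
    exact div_mul_cancel₀ _ (mul_ne_zero (mul_ne_zero h2 h3) hr1c)
  have hB1 : (‖α.1‖ : ℂ) * (ω2 * ω3) = κ * (starRingEnd ℂ) α.1 := by
    apply mul_right_cancel₀ (mul_ne_zero hr2c hr3c)
    linear_combination ((‖α.1‖ : ℂ) * ω3 * (‖α.2.2‖ : ℂ)) * hA2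
      + ((‖α.1‖ : ℂ) * κ * α.2.1) * hA3 + κ * hκm
  have hB2 : (‖α.2.1‖ : ℂ) * (ω1 * ω3) = κ * (starRingEnd ℂ) α.2.1 := by
    apply mul_right_cancel₀
      (show ((‖α.1‖ : ℂ))^2 * (‖α.2.2‖ : ℂ) * α.2.1 ≠ 0 from
        mul_ne_zero (mul_ne_zero (pow_ne_zero 2 hr1c) hr3c) h2)
    linear_combination
      ((‖α.2.1‖ : ℂ) * ω3 * (‖α.2.2‖ : ℂ) * α.2.1 * (‖α.1‖ : ℂ)) * hA1
      + ((‖α.2.1‖ : ℂ) * κ * α.1 * α.2.1 * (‖α.1‖ : ℂ)) * hA3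
      + ((‖α.2.1‖ : ℂ) * κ * α.1) * hκm
      + (κ * ((‖α.2.1‖ : ℂ))^2 * (‖α.2.2‖ : ℂ)) * hm1
      - (κ * ((‖α.1‖ : ℂ))^2 * (‖α.2.2‖ : ℂ)) * hm2
  have hB3 : (‖α.2.2‖ : ℂ) * (ω1 * ω2) = κ * (starRingEnd ℂ) α.2.2 := by
    apply mul_right_cancel₀
      (show ((‖α.1‖ : ℂ))^2 * (‖α.2.1‖ : ℂ) * α.2.2 ≠ 0 from
        mul_ne_zero (mul_ne_zero (pow_ne_zero 2 hr1c) hr2c) h3)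
    linear_combination
      ((‖α.2.2‖ : ℂ) * ω2 * (‖α.2.1‖ : ℂ) * α.2.2 * (‖α.1‖ : ℂ)) * hA1
      + ((‖α.2.2‖ : ℂ) * κ * α.1 * α.2.2 * (‖α.1‖ : ℂ)) * hA2
      + ((‖α.2.2‖ : ℂ) * κ * α.1) * hκm
      + (κ * (‖α.2.1‖ : ℂ) * ((‖α.2.2‖ : ℂ))^2) * hm1
      - (κ * ((‖α.1‖ : ℂ))^2 * (‖α.2.1‖ : ℂ)) * hm3
  -- the rotation identity
  have hid : ∀ z : ℂ × ℂ × ℂ,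
      Fp ((‖α.1‖ : ℂ), (‖α.2.1‖ : ℂ), (‖α.2.2‖ : ℂ))
        (rot3 ω1 ω2 ω3 z) = κ * Fp α z := by
    intro z
    simp only [Fp, rot3, Complex.conj_ofReal]
    linear_combination z.1 * hA1 + z.2.1 * hA2 + z.2.2 * hA3
      - (z.2.1 * z.2.2) * hB1 - (z.1 * z.2.2) * hB2 - (z.1 * z.2.1) * hB3
  have hca1 : ‖((starRingEnd ℂ) ω1)‖ = 1 := by rw [Complex.norm_conj]; exact hωa1
  have hca2 : ‖((starRingEnd ℂ) ω2)‖ = 1 := by rw [Complex.norm_conj]; exact hωa2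
  have hca3 : ‖((starRingEnd ℂ) ω3)‖ = 1 := by rw [Complex.norm_conj]; exact hωa3
  refine ⟨rot3 ω1 ω2 ω3, rot3 ((starRingEnd ℂ) ω1) ((starRingEnd ℂ) ω2) ((starRingEnd ℂ) ω3),
    rot3_diff _ _ _, rot3_diff _ _ _, rot3_maps hωa1 hωa2 hωa3, rot3_maps hca1 hca2 hca3,
    fun z _ => rot3_inv hωa1 hωa2 hωa3 z, fun z _ => rot3_inv' hωa1 hωa2 hωa3 z, ?_⟩
  apply image_Mvar (rot3_maps hωa1 hωa2 hωa3) (rot3_maps hca1 hca2 hca3)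
    (fun z _ => rot3_inv' hωa1 hωa2 hωa3 z)
  · intro z _ hF
    rw [hid z, hF, mul_zero]
  · intro w _ hF
    have h := hid (rot3 ((starRingEnd ℂ) ω1) ((starRingEnd ℂ) ω2) ((starRingEnd ℂ) ω3) w)
    rw [rot3_inv' hωa1 hωa2 hωa3 w, hF] at h
    exact ((mul_eq_zero.mp h.symm).resolve_left hκne)

lemma toCanonical (α : ℂ × ℂ × ℂ) (hα : TriangleIneq α) :
    ∃ φ ψ, IsEquiv φ ψ (Mvar α) (Mvar (1, 1, 1)) := by
  obtain ⟨φ1, ψ1, h1⟩ := step1 α hα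
  obtain ⟨ta, tb, tc⟩ := hα
  obtain ⟨φ2, ψ2, h2⟩ := step2 (‖α.1‖) (‖α.2.1‖) (‖α.2.2‖) tb tc ta
  exact ⟨φ2 ∘ φ1, ψ1 ∘ ψ2, h1.trans h2⟩

end MP

theorem biholomorphic_equivalence_of_M_alpha
    (α β : ℂ × ℂ × ℂ) (hα : TriangleIneq α) (hβ : TriangleIneq β) :
    ∃ φ ψ : (ℂ × ℂ × ℂ) → (ℂ × ℂ × ℂ),
      DifferentiableOn ℂ φ triDisc ∧ DifferentiableOn ℂ ψ triDisc ∧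
      Set.MapsTo φ triDisc triDisc ∧ Set.MapsTo ψ triDisc triDisc ∧
      (∀ z ∈ triDisc, ψ (φ z) = z) ∧ (∀ z ∈ triDisc, φ (ψ z) = z) ∧
      φ '' Mvar α = Mvar β := by
  obtain ⟨φa, ψa, ha⟩ := MP.toCanonical α hα
  obtain ⟨φb, ψb, hb⟩ := MP.toCanonical β hβ
  have h := ha.trans (hb.symm (MP.Mvar_subset β))
  obtain ⟨d1, d2, m1, m2, i1, i2, himg⟩ := h
  exact ⟨ψb ∘ φa, ψa ∘ φb, d1, d2, m1, m2, i1, i2, himg⟩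
end
end

section
/- For every (λ,μ) ∈ V the denominator 1+2(λ+μ)(λμ−1)−λ²μ² is nonzero (indeed positive), and moreover 𝒜(λ,μ) + ℬ(λ,μ) = (λ+μ−2λμ−2)/(2λ+2μ−λμ−1) and 𝒜(λ,μ) − ℬ(λ,μ) = (λ−μ)/(1−λμ), where in addition 2λ+2μ−λμ−1 ≠ 0 and 1−λμ ≠ 0 on V. -/
open Set

/-- The parameter set `V ⊆ ℝ²`. -/
def Vset : Set (ℝ × ℝ) :=
  {p | -1 < p.1 ∧ p.1 < 1 ∧ -1 < p.2 ∧ p.2 < 1 ∧ p.1 + p.2 ≠ 1 ∧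
    |(p.1 + p.2 - p.1 * p.2) / (p.1 + p.2 - 1)| < 1}

/-- `𝒜(λ,μ)`. -/
noncomputable def calA (l m : ℝ) : ℝ :=
  (1 - l ^ 2) * (m ^ 2 - m + 1) / (1 + 2 * (l + m) * (l * m - 1) - l ^ 2 * m ^ 2)

/-- `ℬ(λ,μ)`. -/
noncomputable def calB (l m : ℝ) : ℝ :=
  (1 - m ^ 2) * (l ^ 2 - l + 1) / (1 + 2 * (l + m) * (l * m - 1) - l ^ 2 * m ^ 2)

theorem calA_calB_sum_and_difference (l m : ℝ) (hV : (l, m) ∈ Vset) :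
    0 < 1 + 2 * (l + m) * (l * m - 1) - l ^ 2 * m ^ 2 ∧
    2 * l + 2 * m - l * m - 1 ≠ 0 ∧
    1 - l * m ≠ 0 ∧
    calA l m + calB l m = (l + m - 2 * l * m - 2) / (2 * l + 2 * m - l * m - 1) ∧
    calA l m - calB l m = (l - m) / (1 - l * m) := by
  obtain ⟨h1, h2, h3, h4, h5, h6⟩ := hV
  simp only at h1 h2 h3 h4 h5 h6
  have hs1 : l + m - 1 ≠ 0 := sub_ne_zero.mpr h5
  have habs : |l + m - l * m| < |l + m - 1| := by
    rw [abs_div] at h6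
    have := abs_pos.mpr hs1
    calc |l + m - l * m| = |l + m - l * m| / |l + m - 1| * |l + m - 1| := by
          field_simp
      _ < 1 * |l + m - 1| := by
          exact mul_lt_mul_of_pos_right h6 this
      _ = |l + m - 1| := one_mul _
  have hsq : (l + m - l * m) ^ 2 < (l + m - 1) ^ 2 := by
    nlinarith [mul_self_lt_mul_self (abs_nonneg (l + m - l * m)) habs,
      abs_mul_abs_self (l + m - l * m), abs_mul_abs_self (l + m - 1)]
  have hp : l * m < 1 := by nlinarith
  have hq : 2 * l + 2 * m - l * m - 1 < 0 := by nlinarith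
  have hD : 0 < 1 + 2 * (l + m) * (l * m - 1) - l ^ 2 * m ^ 2 := by nlinarith
  have hlm : 1 - l * m ≠ 0 := ne_of_gt (by linarith)
  refine ⟨hD, ne_of_lt hq, hlm, ?_, ?_⟩
  · unfold calA calB
    rw [← add_div, div_eq_div_iff (ne_of_gt hD) (ne_of_lt hq)]
    ring
  · unfold calA calB
    rw [div_sub_div_same, div_eq_div_iff (ne_of_gt hD) hlm]
    ring
end

section
/- The map Ψ : V → ℝ², Ψ(λ,μ) = (𝒜(λ,μ), ℬ(λ,μ)), is differentiable on the open set V and at every point of V its derivative (Jacobian) is an invertible linear map from ℝ² to ℝ²; in particular Ψ is a local diffeomorphism and an open map on V. -/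
open Set

/-- The map `Ψ(λ,μ) = (𝒜(λ,μ), ℬ(λ,μ))`. -/
noncomputable def Psi (p : ℝ × ℝ) : ℝ × ℝ := (calA p.1 p.2, calB p.1 p.2)

/-! ### Auxiliary linear-algebra gadgets -/

/-- The linear functional `(x, y) ↦ a x + b y` as a continuous linear map. -/
noncomputable def row (a b : ℝ) : (ℝ × ℝ) →L[ℝ] ℝ :=
  a • ContinuousLinearMap.fst ℝ ℝ ℝ + b • ContinuousLinearMap.snd ℝ ℝ ℝ

@[simp] lemma row_apply (a b : ℝ) (v : ℝ × ℝ) : row a b v = a * v.1 + b * v.2 := by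
  simp [row]

/-- The linear map `(x, y) ↦ (a x + b y, c x + d y)`. -/
def lmap (a b c d : ℝ) : (ℝ × ℝ) →ₗ[ℝ] (ℝ × ℝ) where
  toFun p := (a * p.1 + b * p.2, c * p.1 + d * p.2)
  map_add' p q := by simp [Prod.ext_iff]; constructor <;> ring
  map_smul' r p := by simp [Prod.ext_iff, smul_eq_mul]; constructor <;> ring

/-- With nonzero determinant, `lmap a b c d` is a continuous linear equivalence. -/
noncomputable def cle (a b c d : ℝ) (h : a * d - b * c ≠ 0) : (ℝ × ℝ) ≃L[ℝ] (ℝ × ℝ) :=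
  (LinearEquiv.ofLinear (lmap a b c d)
    (lmap (d / (a * d - b * c)) (-b / (a * d - b * c))
          (-c / (a * d - b * c)) (a / (a * d - b * c)))
    (by
      refine LinearMap.ext fun p => ?_
      simp [lmap, Prod.ext_iff]
      constructor <;> [linear_combination p.1 * mul_inv_cancel₀ h; linear_combination p.2 * mul_inv_cancel₀ h])
    (by
      refine LinearMap.ext fun p => ?_
      simp [lmap, Prod.ext_iff]
      constructor <;> [linear_combination p.1 * mul_inv_cancel₀ h; linear_combination p.2 * mul_inv_cancel₀ h])).toContinuousLinearEquiv

lemma cle_apply (a b c d : ℝ) (h : a * d - b * c ≠ 0) (v : ℝ × ℝ) :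
    (cle a b c d h : (ℝ × ℝ) →L[ℝ] (ℝ × ℝ)) v = (a * v.1 + b * v.2, c * v.1 + d * v.2) := rfl

/-! ### Derivative helpers -/

lemma sep_mul {f g : ℝ → ℝ} {f' g' l m : ℝ} (hf : HasDerivAt f f' l) (hg : HasDerivAt g g' m) :
    HasFDerivAt (fun q : ℝ × ℝ => f q.1 * g q.2) (row (f' * g m) (f l * g')) (l, m) := by
  have h1 : HasFDerivAt (fun q : ℝ × ℝ => f q.1)
      (f' • ContinuousLinearMap.fst ℝ ℝ ℝ) (l, m) :=
    hf.comp_hasFDerivAt _ hasFDerivAt_fst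
  have h2 : HasFDerivAt (fun q : ℝ × ℝ => g q.2)
      (g' • ContinuousLinearMap.snd ℝ ℝ ℝ) (l, m) :=
    hg.comp_hasFDerivAt _ hasFDerivAt_snd
  have h := h1.mul h2
  refine h.congr_fderiv ?_
  refine ContinuousLinearMap.ext fun v => ?_
  simp [row]
  ring

lemma sep_mul' {f g : ℝ → ℝ} {f' g' l m : ℝ} (hf : HasDerivAt f f' m) (hg : HasDerivAt g g' l) :
    HasFDerivAt (fun q : ℝ × ℝ => f q.2 * g q.1) (row (f m * g') (f' * g l)) (l, m) := by
  have h1 : HasFDerivAt (fun q : ℝ × ℝ => f q.2)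
      (f' • ContinuousLinearMap.snd ℝ ℝ ℝ) (l, m) :=
    hf.comp_hasFDerivAt _ hasFDerivAt_snd
  have h2 : HasFDerivAt (fun q : ℝ × ℝ => g q.1)
      (g' • ContinuousLinearMap.fst ℝ ℝ ℝ) (l, m) :=
    hg.comp_hasFDerivAt _ hasFDerivAt_fst
  have h := h1.mul h2
  refine h.congr_fderiv ?_
  refine ContinuousLinearMap.ext fun v => ?_
  simp [row]
  ring

/-- Quotient rule, in `row` form. -/
lemma quot {f g : ℝ × ℝ → ℝ} {fa fb ga gb : ℝ} {p : ℝ × ℝ}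
    (hf : HasFDerivAt f (row fa fb) p) (hg : HasFDerivAt g (row ga gb) p) (h0 : g p ≠ 0) :
    HasFDerivAt (fun q => f q / g q)
      (row ((fa * g p - f p * ga) / g p ^ 2) ((fb * g p - f p * gb) / g p ^ 2)) p := by
  have hinv : HasFDerivAt (fun q => (g q)⁻¹) ((-(g p ^ 2)⁻¹) • row ga gb) p :=
    (hasDerivAt_inv h0).comp_hasFDerivAt p hg
  have h := hf.mul hinv
  have heq : (fun q => f q / g q) = fun q => f q * (g q)⁻¹ := by
    funext q; exact div_eq_mul_inv _ _
  rw [heq]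
  refine h.congr_fderiv ?_
  refine ContinuousLinearMap.ext fun v => ?_
  simp [row]
  field_simp
  ring

lemma hdu1 (x : ℝ) : HasDerivAt (fun t : ℝ => 1 - t ^ 2) (-(2 * x)) x := by
  simpa using (hasDerivAt_pow 2 x).const_sub 1

lemma hdu2 (x : ℝ) : HasDerivAt (fun t : ℝ => t ^ 2 - t + 1) (2 * x - 1) x := by
  simpa using ((hasDerivAt_pow 2 x).sub (hasDerivAt_id x)).add_const 1

lemma hdsq (x : ℝ) : HasDerivAt (fun t : ℝ => t ^ 2) (2 * x) x := by
  simpa using hasDerivAt_pow 2 x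

lemma hdlin (a b x : ℝ) : HasDerivAt (fun t : ℝ => a + b * t) b x := by
  simpa using ((hasDerivAt_id x).const_mul b).const_add a

/-! ### The main quantitative statements at a point of `V` -/

section pointwise

variable (l m : ℝ)

/-- Denominator is positive on `V`. -/
lemma den_pos (h1 : l + m ≠ 1) (h2 : |(l + m - l * m) / (l + m - 1)| < 1) :
    0 < 1 + 2 * (l + m) * (l * m - 1) - l ^ 2 * m ^ 2 := by
  have hs : l + m - 1 ≠ 0 := sub_ne_zero.mpr h1
  have habs : |l + m - l * m| < |l + m - 1| := by
    rw [abs_div, div_lt_one (abs_pos.mpr hs)] at h2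
    exact h2
  have hsq : (l + m - l * m) * (l + m - l * m) < (l + m - 1) * (l + m - 1) := by
    have := mul_self_lt_mul_self (abs_nonneg _) habs
    rwa [abs_mul_abs_self, abs_mul_abs_self] at this
  nlinarith [hsq]

end pointwise

/-- Key pointwise lemma: at every point of `V`, `Psi` has an invertible (strict) derivative. -/
lemma key : ∀ p ∈ Vset, ∃ f : (ℝ × ℝ) ≃L[ℝ] (ℝ × ℝ),
    HasFDerivAt Psi (f : (ℝ × ℝ) →L[ℝ] (ℝ × ℝ)) p ∧
    HasStrictFDerivAt Psi (f : (ℝ × ℝ) →L[ℝ] (ℝ × ℝ)) p := by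
  rintro ⟨l, m⟩ ⟨hl1, hl2, hm1, hm2, hs, habs⟩
  simp only at hl1 hl2 hm1 hm2 hs habs
  have hDpos : 0 < 1 + 2 * (l + m) * (l * m - 1) - l ^ 2 * m ^ 2 := den_pos l m hs habs
  set Dv : ℝ := 1 + 2 * (l + m) * (l * m - 1) - l ^ 2 * m ^ 2 with hDv
  have hD0 : Dv ≠ 0 := ne_of_gt hDpos
  -- numerators and partial derivatives
  set Na : ℝ := (1 - l ^ 2) * (m ^ 2 - m + 1) with hNa
  set Nb : ℝ := (1 - m ^ 2) * (l ^ 2 - l + 1) with hNb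
  set Dl : ℝ := 2 * (l * m - 1) + 2 * (l + m) * m - 2 * l * m ^ 2 with hDl
  set Dm : ℝ := 2 * (l * m - 1) + 2 * (l + m) * l - 2 * l ^ 2 * m with hDm
  set a : ℝ := (-(2 * l) * (m ^ 2 - m + 1) * Dv - Na * Dl) / Dv ^ 2 with ha
  set b : ℝ := ((1 - l ^ 2) * (2 * m - 1) * Dv - Na * Dm) / Dv ^ 2 with hb
  set c : ℝ := ((1 - m ^ 2) * (2 * l - 1) * Dv - Nb * Dl) / Dv ^ 2 with hc
  set d : ℝ := (-(2 * m) * (l ^ 2 - l + 1) * Dv - Nb * Dm) / Dv ^ 2 with hd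
  -- derivative of the denominator
  have hDder : HasFDerivAt (fun q : ℝ × ℝ => 1 + 2 * (q.1 + q.2) * (q.1 * q.2 - 1)
      - q.1 ^ 2 * q.2 ^ 2) (row Dl Dm) (l, m) := by
    have t1 := sep_mul (hdlin 1 (-2) l) (hasDerivAt_const m (1 : ℝ))
    have t2 := sep_mul (hasDerivAt_const l (-2 : ℝ)) (hdlin 0 1 m)
    have t3 := sep_mul (hdsq l) (hdlin 0 2 m)
    have t4 := sep_mul (hdlin 0 2 l) (hdsq m)
    have t5 := sep_mul (hdsq l) (hdsq m)
    have h := ((((t1.add t2).add t3).add t4).sub t5)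
    refine (h.congr_fderiv ?_).congr_of_eventuallyEq (Filter.Eventually.of_forall fun q => ?_)
    · refine ContinuousLinearMap.ext fun v => ?_
      simp [hDl, hDm]
      ring
    · simp only [Pi.add_apply, Pi.sub_apply]; ring
  -- derivative of the first component
  have hAder : HasFDerivAt (fun q : ℝ × ℝ => calA q.1 q.2) (row a b) (l, m) := by
    have hN : HasFDerivAt (fun q : ℝ × ℝ => (1 - q.1 ^ 2) * (q.2 ^ 2 - q.2 + 1))
        (row (-(2 * l) * (m ^ 2 - m + 1)) ((1 - l ^ 2) * (2 * m - 1))) (l, m) :=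
      sep_mul (hdu1 l) (hdu2 m)
    have h := quot hN hDder (by simpa [← hDv] using hD0)
    exact h
  -- derivative of the second component
  have hBder : HasFDerivAt (fun q : ℝ × ℝ => calB q.1 q.2) (row c d) (l, m) := by
    have hN : HasFDerivAt (fun q : ℝ × ℝ => (1 - q.2 ^ 2) * (q.1 ^ 2 - q.1 + 1))
        (row ((1 - m ^ 2) * (2 * l - 1)) (-(2 * m) * (l ^ 2 - l + 1))) (l, m) :=
      sep_mul' (hdu1 m) (hdu2 l)
    have h := quot hN hDder (by simpa [← hDv] using hD0)
    exact h
  -- determinant is nonzero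
  have hl2' : (0 : ℝ) < 1 - l ^ 2 := by nlinarith
  have hm2' : (0 : ℝ) < 1 - m ^ 2 := by nlinarith
  have hdet : a * d - b * c ≠ 0 := by
    have hkey : a * d - b * c = 3 * (1 - l ^ 2) * (1 - m ^ 2) / Dv ^ 2 := by
      rw [ha, hb, hc, hd, hNa, hNb, hDl, hDm]
      field_simp
      rw [hDv]; ring
    rw [hkey]
    positivity
  refine ⟨cle a b c d hdet, ?_, ?_⟩
  · have h := HasFDerivAt.prodMk hAder hBder
    exact h
  · -- strict differentiability via C¹ smoothness
    have hcd : ContDiffAt ℝ 1 Psi (l, m) := by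
      have hden : ContDiffAt ℝ 1 (fun q : ℝ × ℝ =>
          1 + 2 * (q.1 + q.2) * (q.1 * q.2 - 1) - q.1 ^ 2 * q.2 ^ 2) (l, m) := by fun_prop
      have hn1 : ContDiffAt ℝ 1 (fun q : ℝ × ℝ =>
          (1 - q.1 ^ 2) * (q.2 ^ 2 - q.2 + 1)) (l, m) := by fun_prop
      have hn2 : ContDiffAt ℝ 1 (fun q : ℝ × ℝ =>
          (1 - q.2 ^ 2) * (q.1 ^ 2 - q.1 + 1)) (l, m) := by fun_prop
      have h0 : (fun q : ℝ × ℝ =>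
          1 + 2 * (q.1 + q.2) * (q.1 * q.2 - 1) - q.1 ^ 2 * q.2 ^ 2) (l, m) ≠ 0 := by
        simpa [← hDv] using hD0
      exact ContDiffAt.prodMk (hn1.div hden h0) (hn2.div hden h0)
    have hst := hcd.hasStrictFDerivAt one_ne_zero
    have hF : HasFDerivAt Psi ((cle a b c d hdet : (ℝ × ℝ) →L[ℝ] (ℝ × ℝ))) (l, m) := by
      have h := HasFDerivAt.prodMk hAder hBder
      exact h
    rwa [hF.fderiv] at hst

theorem Psi_local_diffeomorphism :
    DifferentiableOn ℝ Psi Vset ∧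
    (∀ p ∈ Vset, ∃ f : (ℝ × ℝ) ≃L[ℝ] (ℝ × ℝ),
      HasFDerivAt Psi (f : (ℝ × ℝ) →L[ℝ] (ℝ × ℝ)) p) ∧
    (∀ s : Set (ℝ × ℝ), s ⊆ Vset → IsOpen s → IsOpen (Psi '' s)) := by
  refine ⟨?_, ?_, ?_⟩
  · intro p hp
    obtain ⟨f, hf, -⟩ := key p hp
    exact hf.differentiableAt.differentiableWithinAt
  · intro p hp
    obtain ⟨f, hf, -⟩ := key p hp
    exact ⟨f, hf⟩
  · intro s hsV hso
    rw [isOpen_iff_mem_nhds]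
    rintro y ⟨x, hxs, rfl⟩
    obtain ⟨f, -, hfs⟩ := key x (hsV hxs)
    rw [← hfs.map_nhds_eq_of_equiv]
    exact Filter.image_mem_map (hso.mem_nhds hxs)
end

section
/- The image of V under the map (λ,μ) ↦ (𝒜(λ,μ), ℬ(λ,μ)) is exactly the set 𝒲₊ = {(x₁,x₂) ∈ ℝ² : x₁ > 0, x₂ > 0, x₁ + x₂ > 1, x₁ + 1 > x₂, x₂ + 1 > x₁}. -/
open Set

/-- Forward direction: points of `V` map into the open triangle region. -/
lemma forward_dir (l m : ℝ) (h : (l, m) ∈ Vset) :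
    0 < calA l m ∧ 0 < calB l m ∧ 1 < calA l m + calB l m ∧
      calB l m < calA l m + 1 ∧ calA l m < calB l m + 1 := by
  obtain ⟨h1, h2, h3, h4, h5, h6⟩ := h
  simp only at h1 h2 h3 h4 h5 h6
  have hy : l + m - 1 ≠ 0 := sub_ne_zero.mpr h5
  rw [abs_div, div_lt_one (abs_pos.mpr hy)] at h6
  have hsq : (l + m - l * m) ^ 2 < (l + m - 1) ^ 2 := by
    rw [← sq_abs (l + m - l * m), ← sq_abs (l + m - 1)]
    exact pow_lt_pow_left₀ h6 (abs_nonneg _) two_ne_zero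
  have h1lm : 0 < 1 - l * m := by nlinarith
  have hE : 0 < 1 + l * m - 2 * l - 2 * m := by nlinarith
  have hD : 0 < 1 + 2 * (l + m) * (l * m - 1) - l ^ 2 * m ^ 2 := by
    nlinarith [mul_pos h1lm hE]
  have hl1 : 0 < 1 + l := by linarith
  have hl2 : 0 < 1 - l := by linarith
  have hm1 : 0 < 1 + m := by linarith
  have hm2 : 0 < 1 - m := by linarith
  have hNA : 0 < (1 - l ^ 2) * (m ^ 2 - m + 1) := by
    nlinarith [mul_pos hl2 hl1, sq_nonneg (2 * m - 1)]
  have hNB : 0 < (1 - m ^ 2) * (l ^ 2 - l + 1) := by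
    nlinarith [mul_pos hm2 hm1, sq_nonneg (2 * l - 1)]
  refine ⟨div_pos hNA hD, div_pos hNB hD, ?_, ?_, ?_⟩
  · rw [calA, calB, ← add_div, lt_div_iff₀ hD]
    nlinarith [mul_pos (mul_pos h1lm hl1) hm1]
  · have heq : calA l m + 1 - calB l m =
        ((1 + l) * (1 - m) * (1 + l * m - 2 * l - 2 * m)) /
          (1 + 2 * (l + m) * (l * m - 1) - l ^ 2 * m ^ 2) := by
      rw [calA, calB]
      field_simp
      ring
    have := div_pos (mul_pos (mul_pos hl1 hm2) hE) hD
    linarith [heq ▸ this]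
  · have heq : calB l m + 1 - calA l m =
        ((1 - l) * (1 + m) * (1 + l * m - 2 * l - 2 * m)) /
          (1 + 2 * (l + m) * (l * m - 1) - l ^ 2 * m ^ 2) := by
      rw [calA, calB, div_add_one hD.ne', ← sub_div]
      congr 1
      ring
    have := div_pos (mul_pos (mul_pos hl2 hm1) hE) hD
    linarith [heq ▸ this]

/-- Key substitution lemma. -/
lemma key_subst (u v : ℝ) (hu : 0 < u) (hv : 0 < v) (huv : 1 < 3 * (u * v)) :
    ((1 - u) / (1 + u), (1 - v) / (1 + v)) ∈ Vset ∧
    calA ((1 - u) / (1 + u)) ((1 - v) / (1 + v)) = u * (1 + 3 * v ^ 2) / ((u + v) * (3 * (u * v) - 1)) ∧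
    calB ((1 - u) / (1 + u)) ((1 - v) / (1 + v)) = v * (1 + 3 * u ^ 2) / ((u + v) * (3 * (u * v) - 1)) := by
  have hu1 : (0:ℝ) < 1 + u := by linarith
  have hv1 : (0:ℝ) < 1 + v := by linarith
  have hu1' : (1 + u) ≠ 0 := ne_of_gt hu1
  have hv1' : (1 + v) ≠ 0 := ne_of_gt hv1
  set l := (1 - u) / (1 + u) with hl
  set m := (1 - v) / (1 + v) with hm
  have hden2 : 0 < (1 + u) * (1 + v) := mul_pos hu1 hv1
  have hdneg : 1 - u - v - 3 * (u * v) < 0 := by nlinarith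
  have hsum : l + m - 1 = (1 - u - v - 3 * (u * v)) / ((1 + u) * (1 + v)) := by
    rw [hl, hm]; field_simp; ring
  have hprod : l + m - l * m = (1 + u + v - 3 * (u * v)) / ((1 + u) * (1 + v)) := by
    rw [hl, hm]; field_simp; ring
  have hsumneg : l + m - 1 < 0 := by
    rw [hsum]; exact div_neg_of_neg_of_pos hdneg hden2
  have hne : l + m ≠ 1 := by
    intro h
    rw [h] at hsumneg
    simp at hsumneg
  have hxq : (l + m - l * m) / (l + m - 1) =
      (1 + u + v - 3 * (u * v)) / (1 - u - v - 3 * (u * v)) := by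
    rw [hprod, hsum, div_div_div_cancel_right₀ (ne_of_gt hden2)]
  have habs : |(l + m - l * m) / (l + m - 1)| < 1 := by
    rw [hxq, abs_div, div_lt_one (abs_pos.mpr (ne_of_lt hdneg)), abs_of_neg hdneg, abs_lt]
    constructor <;> nlinarith
  have hlm1 : -1 < l := by
    rw [hl, lt_div_iff₀ hu1]; linarith
  have hlm2 : l < 1 := by
    rw [hl, div_lt_one hu1]; linarith
  have hlm3 : -1 < m := by
    rw [hm, lt_div_iff₀ hv1]; linarith
  have hlm4 : m < 1 := by
    rw [hm, div_lt_one hv1]; linarith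
  have hVmem : (l, m) ∈ Vset := ⟨hlm1, hlm2, hlm3, hlm4, hne, habs⟩
  have hDeq : 1 + 2 * (l + m) * (l * m - 1) - l ^ 2 * m ^ 2 =
      (2 * (u + v)) * (6 * (u * v) - 2) / (((1 + u) * (1 + v)) ^ 2) := by
    rw [hl, hm]; field_simp; ring
  have hDne : 1 + 2 * (l + m) * (l * m - 1) - l ^ 2 * m ^ 2 ≠ 0 := by
    rw [hDeq]
    exact ne_of_gt (div_pos (mul_pos (by linarith) (by linarith)) (pow_pos hden2 2))
  have hTne : (u + v) * (3 * (u * v) - 1) ≠ 0 :=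
    ne_of_gt (mul_pos (by linarith) (by linarith))
  refine ⟨hVmem, ?_, ?_⟩
  · rw [calA, div_eq_div_iff hDne hTne, hl, hm]
    field_simp
    ring
  · rw [calB, div_eq_div_iff hDne hTne, hl, hm]
    field_simp
    ring

theorem image_of_V_is_W_plus :
    (fun p : ℝ × ℝ => (calA p.1 p.2, calB p.1 p.2)) '' Vset =
      {x : ℝ × ℝ | 0 < x.1 ∧ 0 < x.2 ∧ 1 < x.1 + x.2 ∧ x.2 < x.1 + 1 ∧ x.1 < x.2 + 1} := by
  ext ⟨a, b⟩
  simp only [mem_image, mem_setOf_eq, Prod.mk.injEq, Prod.exists]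
  constructor
  · rintro ⟨l, m, hV, rfl, rfl⟩
    exact forward_dir l m hV
  · rintro ⟨ha, hb, hab, hba, hab'⟩
    have h1 : (0:ℝ) < a + b - 1 := by linarith
    have hr2 : (a - b) ^ 2 < 1 := by nlinarith
    have hr1 : a - b < 1 := by nlinarith
    have hr1' : -1 < a - b := by nlinarith
    set q := (a + b + 1) / (3 * (a + b - 1)) with hqdef
    have hq3 : 3 * q * (a + b - 1) = a + b + 1 := by
      rw [hqdef]; field_simp
    have hqpos : 0 < q := div_pos (by linarith) (by linarith)
    have h1r : (0:ℝ) < 1 - (a - b) ^ 2 := by linarith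
    set S := Real.sqrt (q / (1 - (a - b) ^ 2)) with hSdef
    have hSpos : 0 < S := Real.sqrt_pos.mpr (div_pos hqpos h1r)
    have hS2 : S ^ 2 = q / (1 - (a - b) ^ 2) :=
      Real.sq_sqrt (le_of_lt (div_pos hqpos h1r))
    have hS2' : S ^ 2 * (1 - (a - b) ^ 2) = q := by
      rw [hS2, div_mul_cancel₀ _ (ne_of_gt h1r)]
    set u := S * (1 - (a - b)) with hudef
    set v := S * (1 + (a - b)) with hvdef
    have hu : 0 < u := mul_pos hSpos (by linarith)
    have hv : 0 < v := mul_pos hSpos (by linarith)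
    have huvq : u * v = q := by
      rw [hudef, hvdef]
      linear_combination hS2'
    have h3uv : 1 < 3 * (u * v) := by
      rw [huvq]
      nlinarith [hq3]
    obtain ⟨hV, hA, hB⟩ := key_subst u v hu hv h3uv
    refine ⟨(1 - u) / (1 + u), (1 - v) / (1 + v), hV, ?_, ?_⟩
    · rw [hA, div_eq_iff (ne_of_gt (mul_pos (by linarith) (by linarith))), hudef, hvdef]
      linear_combination (3 * S * (1 + (a - b)) - 6 * a * S) * hS2' - S * hq3
    · rw [hB, div_eq_iff (ne_of_gt (mul_pos (by linarith) (by linarith))), hudef, hvdef]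
      linear_combination (3 * S * (1 - (a - b)) - 6 * b * S) * hS2' - S * hq3
end

section
/- Let a₁, a₂, a₃ ∈ 𝔻 be pairwise distinct. Then for every λ ∈ 𝔻 and every t ∈ [0,1] the point (λ·m_{ta₁}(λ), λ·m_{ta₂}(λ), λ·m_{ta₃}(λ)) belongs to M_α with α = (a₃ − a₂, a₁ − a₃, a₂ − a₁); in particular each coordinate λ·m_{ta_j}(λ) lies in 𝔻. Moreover, if a₁, a₂, a₃ do not lie on a common real line in ℂ ≅ ℝ², then this triple α satisfies the triangle inequality. -/
open Complex Set

/-- The Möbius map `m_a(λ) = (a - λ)/(1 - conj(a)·λ)`. -/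
noncomputable def mob (a z : ℂ) : ℂ := (a - z) / (1 - (starRingEnd ℂ) a * z)

lemma den_ne (w : ℂ) (h : ‖w‖ < 1) : (1 : ℂ) - w ≠ 0 := by
  intro he
  have hw : (1 : ℂ) = w := sub_eq_zero.mp he
  rw [← hw] at h
  simp at h

lemma mob_abs_lt (b z : ℂ) (hb : ‖b‖ < 1) (hz : ‖z‖ < 1) :
    ‖mob b z‖ < 1 := by
  have habs : ‖(starRingEnd ℂ) b * z‖ < 1 := by
    rw [norm_mul, Complex.norm_conj]
    nlinarith [norm_nonneg b, norm_nonneg z]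
  have hd : (1 : ℂ) - (starRingEnd ℂ) b * z ≠ 0 := den_ne _ habs
  rw [mob, norm_div, div_lt_one (norm_pos_iff.mpr hd)]
  have key : Complex.normSq (1 - (starRingEnd ℂ) b * z) - Complex.normSq (b - z) =
      (1 - Complex.normSq b) * (1 - Complex.normSq z) := by
    simp only [Complex.normSq_apply, Complex.sub_re, Complex.sub_im, Complex.mul_re,
      Complex.mul_im, Complex.one_re, Complex.one_im, Complex.conj_re, Complex.conj_im]
    ring
  have hb2 : Complex.normSq b < 1 := by
    rw [← Complex.sq_norm]; nlinarith [norm_nonneg b]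
  have hz2 : Complex.normSq z < 1 := by
    rw [← Complex.sq_norm]; nlinarith [norm_nonneg z]
  have hlt : Complex.normSq (b - z) < Complex.normSq (1 - (starRingEnd ℂ) b * z) := by
    nlinarith
  rw [Complex.norm_def, Complex.norm_def]
  exact Real.sqrt_lt_sqrt (Complex.normSq_nonneg _) hlt

lemma tri_strict (x y z : ℂ) (h : ¬ Collinear ℝ ({x, y, z} : Set ℂ)) :
    ‖x - z‖ < ‖x - y‖ + ‖y - z‖ := by
  have htri : dist x z ≤ dist x y + dist y z := dist_triangle x y z
  rcases lt_or_eq_of_le htri with hlt | heq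
  · simpa [Complex.dist_eq] using hlt
  · exfalso
    exact h ((dist_add_dist_eq_iff.mp heq.symm).collinear)

theorem surface_N_subset_of_M_alpha
    (a₁ a₂ a₃ : ℂ) (ha₁ : ‖a₁‖ < 1) (ha₂ : ‖a₂‖ < 1)
    (ha₃ : ‖a₃‖ < 1)
    (h12 : a₁ ≠ a₂) (h13 : a₁ ≠ a₃) (h23 : a₂ ≠ a₃) :
    (∀ lam : ℂ, ‖lam‖ < 1 → ∀ t : ℝ, t ∈ Set.Icc (0 : ℝ) 1 →
      (lam * mob ((t : ℂ) * a₁) lam, lam * mob ((t : ℂ) * a₂) lam,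
        lam * mob ((t : ℂ) * a₃) lam) ∈ Mvar (a₃ - a₂, a₁ - a₃, a₂ - a₁)) ∧
    (¬ Collinear ℝ ({a₁, a₂, a₃} : Set ℂ) →
      TriangleIneq (a₃ - a₂, a₁ - a₃, a₂ - a₁)) := by
  constructor
  · intro lam hlam t ht
    obtain ⟨ht0, ht1⟩ := ht
    have hta : ∀ a : ℂ, ‖a‖ < 1 → ‖(t : ℂ) * a‖ < 1 := by
      intro a ha
      rw [norm_mul, Complex.norm_real, Real.norm_eq_abs, _root_.abs_of_nonneg ht0]
      nlinarith [norm_nonneg a]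
    have hcoord : ∀ a : ℂ, ‖a‖ < 1 →
        ‖lam * mob ((t : ℂ) * a) lam‖ < 1 := by
      intro a ha
      rw [norm_mul]
      have := mob_abs_lt ((t : ℂ) * a) lam (hta a ha) hlam
      nlinarith [norm_nonneg lam, norm_nonneg (mob ((t : ℂ) * a) lam)]
    have hd : ∀ a : ℂ, ‖a‖ < 1 →
        (1 : ℂ) - (t : ℂ) * (starRingEnd ℂ) a * lam ≠ 0 := by
      intro a ha
      apply den_ne
      rw [norm_mul, norm_mul, Complex.norm_real, Real.norm_eq_abs, Complex.norm_conj, _root_.abs_of_nonneg ht0]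
      nlinarith [norm_nonneg a, norm_nonneg lam,
        mul_nonneg (norm_nonneg a) (norm_nonneg lam)]
    refine ⟨⟨hcoord a₁ ha₁, hcoord a₂ ha₂, hcoord a₃ ha₃⟩, ?_⟩
    simp only [mob, map_mul, map_sub, Complex.conj_ofReal]
    have hd₁ := hd a₁ ha₁
    have hd₂ := hd a₂ ha₂
    have hd₃ := hd a₃ ha₃
    have hd₁' : 1 - lam * ↑t * (starRingEnd ℂ) a₁ ≠ 0 := by convert hd₁ using 1; ring
    have hd₂' : 1 - lam * ↑t * (starRingEnd ℂ) a₂ ≠ 0 := by convert hd₂ using 1; ring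
    have hd₃' : 1 - lam * ↑t * (starRingEnd ℂ) a₃ ≠ 0 := by convert hd₃ using 1; ring
    field_simp
    ring
  · intro hcol
    refine ⟨?_, ?_, ?_⟩
    · -- |a₂ - a₁| < |a₃ - a₂| + |a₁ - a₃|
      have h := tri_strict a₂ a₃ a₁ (fun hc => hcol (hc.subset (by intro w hw; simp at hw; rcases hw with h|h|h <;> simp [h])))
      calc ‖a₂ - a₁‖ < ‖a₂ - a₃‖ + ‖a₃ - a₁‖ := h
        _ = ‖a₃ - a₂‖ + ‖a₁ - a₃‖ := by
            rw [norm_sub_rev a₂ a₃, norm_sub_rev a₃ a₁]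
    · have h := tri_strict a₃ a₁ a₂ (fun hc => hcol (hc.subset (by intro w hw; simp at hw; rcases hw with h|h|h <;> simp [h])))
      calc ‖a₃ - a₂‖ < ‖a₃ - a₁‖ + ‖a₁ - a₂‖ := h
        _ = ‖a₁ - a₃‖ + ‖a₂ - a₁‖ := by
            rw [norm_sub_rev a₃ a₁, norm_sub_rev a₁ a₂]
    · have h := tri_strict a₁ a₂ a₃ (fun hc => hcol (hc.subset (by intro w hw; simp at hw; rcases hw with h|h|h <;> simp [h])))
      calc ‖a₁ - a₃‖ < ‖a₁ - a₂‖ + ‖a₂ - a₃‖ := h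
        _ = ‖a₂ - a₁‖ + ‖a₃ - a₂‖ := by
            rw [norm_sub_rev a₁ a₂, norm_sub_rev a₂ a₃]
        _ = ‖a₃ - a₂‖ + ‖a₂ - a₁‖ := by ring
end

section
/- Let s, t ∈ [0,1] and ω, ν ∈ ℂ with |ω| = |ν| = 1. Set A = ts, B = t(1−s), C = 1−t, D = νt, E = ωs + ν(1−s)(1−t), F = νs(1−t) + ω(1−s). Then for every (z₁,z₂,z₃) ∈ 𝔻³ the denominators 1 + ν(1−s)z₁ + νsz₂, 1 + ω(1−t)Φ_{s,ν}(z₁,z₂) + ωtz₃ and 1 + ων(conj(F)z₁ + conj(E)z₂ + conj(D)z₃ + Cz₁z₂ + Bz₁z₃ + Az₂z₃) are nonzero, and Φ_{t,ω}(Φ_{s,ν}(z₁,z₂), z₃) = (Az₁ + Bz₂ + Cz₃ + Dz₁z₂ + Ez₁z₃ + Fz₂z₃ + ωνz₁z₂z₃) / (1 + ων(conj(F)z₁ + conj(E)z₂ + conj(D)z₃ + Cz₁z₂ + Bz₁z₃ + Az₂z₃)). -/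
open Complex Set

/-- The magic function `Φ_{a,η}(x,y) = (ax + (1−a)y + ηxy)/(1 + η(1−a)x + ηay)`. -/
noncomputable def magic (a : ℝ) (η : ℂ) (x y : ℂ) : ℂ :=
  ((a : ℂ) * x + (1 - (a : ℂ)) * y + η * x * y) /
    (1 + η * (1 - (a : ℂ)) * x + η * (a : ℂ) * y)

lemma magic_den_ne (a : ℝ) (ha : a ∈ Set.Icc (0:ℝ) 1) (η x y : ℂ)
    (hη : ‖η‖ = 1) (hx : ‖x‖ < 1) (hy : ‖y‖ < 1) :
    1 + η * (1 - (a : ℂ)) * x + η * (a : ℂ) * y ≠ 0 := by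
  intro h
  have h2 : η * (1 - (a : ℂ)) * x + η * (a : ℂ) * y = -1 := by linear_combination h
  have e1 : ‖η * (1 - (a : ℂ)) * x‖ = (1 - a) * ‖x‖ := by
    rw [norm_mul, norm_mul, hη, one_mul,
      show ((1:ℂ) - (a:ℂ)) = ((1 - a : ℝ) : ℂ) by push_cast; ring, Complex.norm_real, Real.norm_eq_abs,
      _root_.abs_of_nonneg (by linarith [ha.2] : (0:ℝ) ≤ 1 - a)]
  have e2 : ‖η * (a : ℂ) * y‖ = a * ‖y‖ := by
    rw [norm_mul, norm_mul, hη, one_mul, Complex.norm_real, Real.norm_eq_abs, _root_.abs_of_nonneg ha.1]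
  have hb : ‖η * (1 - (a : ℂ)) * x + η * (a : ℂ) * y‖ ≤
      (1 - a) * ‖x‖ + a * ‖y‖ := by
    calc ‖η * (1 - (a : ℂ)) * x + η * (a : ℂ) * y‖
        ≤ ‖η * (1 - (a : ℂ)) * x‖ + ‖η * (a : ℂ) * y‖ :=
          norm_add_le _ _
      _ = (1 - a) * ‖x‖ + a * ‖y‖ := by rw [e1, e2]
  rw [h2] at hb
  simp at hb
  rcases eq_or_lt_of_le ha.1 with h0 | h0
  · nlinarith
  · nlinarith [mul_nonneg (by linarith [ha.2] : (0:ℝ) ≤ 1 - a)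
      (by linarith : (0:ℝ) ≤ 1 - ‖x‖), mul_pos h0 (by linarith : (0:ℝ) < 1 - ‖y‖)]

lemma magic_lt (a : ℝ) (ha : a ∈ Set.Icc (0:ℝ) 1) (η x y : ℂ)
    (hη : ‖η‖ = 1) (hx : ‖x‖ < 1) (hy : ‖y‖ < 1) :
    ‖magic a η x y‖ < 1 := by
  have hη0 : η ≠ 0 := by intro h; simp [h] at hη
  have hc : (starRingEnd ℂ) η = η⁻¹ := (Complex.inv_eq_conj hη).symm
  have hden := magic_den_ne a ha η x y hη hx hy
  have h1x : (1 : ℂ) + η * x ≠ 0 := by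
    intro h
    have : ‖η * x‖ = 1 := by
      have : η * x = -1 := by linear_combination h
      simp [this]
    rw [norm_mul, hη, one_mul] at this
    linarith
  have h1y : (1 : ℂ) + η * y ≠ 0 := by
    intro h
    have : ‖η * y‖ = 1 := by
      have : η * y = -1 := by linear_combination h
      simp [this]
    rw [norm_mul, hη, one_mul] at this
    linarith
  have key : Complex.normSq (1 + η * (1 - (a : ℂ)) * x + η * (a : ℂ) * y)
      - Complex.normSq ((a : ℂ) * x + (1 - (a : ℂ)) * y + η * x * y)
      = (1 - a) * (1 - Complex.normSq y) * Complex.normSq (1 + η * x)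
        + a * (1 - Complex.normSq x) * Complex.normSq (1 + η * y) := by
    apply Complex.ofReal_inj.mp
    push_cast
    rw [← Complex.mul_conj, ← Complex.mul_conj, ← Complex.mul_conj, ← Complex.mul_conj,
      ← Complex.mul_conj, ← Complex.mul_conj]
    simp only [map_add, map_mul, map_sub, map_one, Complex.conj_ofReal, hc]
    field_simp
    ring
  have hnum_lt : Complex.normSq ((a : ℂ) * x + (1 - (a : ℂ)) * y + η * x * y)
      < Complex.normSq (1 + η * (1 - (a : ℂ)) * x + η * (a : ℂ) * y) := by
    have hnx : Complex.normSq x < 1 := by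
      rw [← Complex.sq_norm]; nlinarith [norm_nonneg x]
    have hny : Complex.normSq y < 1 := by
      rw [← Complex.sq_norm]; nlinarith [norm_nonneg y]
    have p1 : 0 < Complex.normSq (1 + η * x) := Complex.normSq_pos.mpr h1x
    have p2 : 0 < Complex.normSq (1 + η * y) := Complex.normSq_pos.mpr h1y
    rcases eq_or_lt_of_le ha.1 with h0 | h0
    · subst h0
      nlinarith [mul_pos (show (0:ℝ) < 1 - Complex.normSq y by linarith) p1]
    · nlinarith [ha.2, mul_pos h0 (mul_pos (show (0:ℝ) < 1 - Complex.normSq x by linarith) p2),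
        mul_nonneg (by linarith [ha.2] : (0:ℝ) ≤ 1 - a)
        (mul_nonneg (by linarith : (0:ℝ) ≤ 1 - Complex.normSq y) p1.le)]
  have habs : ‖(a : ℂ) * x + (1 - (a : ℂ)) * y + η * x * y‖
      < ‖1 + η * (1 - (a : ℂ)) * x + η * (a : ℂ) * y‖ := by
    have := hnum_lt
    rw [← Complex.sq_norm, ← Complex.sq_norm] at this
    exact lt_of_pow_lt_pow_left₀ 2 (norm_nonneg _) this
  rw [magic, norm_div]
  rw [div_lt_one (norm_pos_iff.mpr hden)]
  exact habs

theorem composition_of_magic_functions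
    (s t : ℝ) (hs : s ∈ Set.Icc (0 : ℝ) 1) (ht : t ∈ Set.Icc (0 : ℝ) 1)
    (ω ν : ℂ) (hω : ‖ω‖ = 1) (hν : ‖ν‖ = 1)
    (A B C D E F : ℂ)
    (hA : A = (t : ℂ) * (s : ℂ)) (hB : B = (t : ℂ) * (1 - (s : ℂ)))
    (hC : C = 1 - (t : ℂ)) (hD : D = ν * (t : ℂ))
    (hE : E = ω * (s : ℂ) + ν * (1 - (s : ℂ)) * (1 - (t : ℂ)))
    (hF : F = ν * (s : ℂ) * (1 - (t : ℂ)) + ω * (1 - (s : ℂ))) :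
    ∀ z₁ z₂ z₃ : ℂ, ‖z₁‖ < 1 → ‖z₂‖ < 1 → ‖z₃‖ < 1 →
      (1 + ν * (1 - (s : ℂ)) * z₁ + ν * (s : ℂ) * z₂ ≠ 0) ∧
      (1 + ω * (1 - (t : ℂ)) * magic s ν z₁ z₂ + ω * (t : ℂ) * z₃ ≠ 0) ∧
      (1 + ω * ν * ((starRingEnd ℂ) F * z₁ + (starRingEnd ℂ) E * z₂ + (starRingEnd ℂ) D * z₃ +
        C * z₁ * z₂ + B * z₁ * z₃ + A * z₂ * z₃) ≠ 0) ∧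
      magic t ω (magic s ν z₁ z₂) z₃ =
        (A * z₁ + B * z₂ + C * z₃ + D * z₁ * z₂ + E * z₁ * z₃ + F * z₂ * z₃ +
            ω * ν * z₁ * z₂ * z₃) /
          (1 + ω * ν * ((starRingEnd ℂ) F * z₁ + (starRingEnd ℂ) E * z₂ + (starRingEnd ℂ) D * z₃ +
            C * z₁ * z₂ + B * z₁ * z₃ + A * z₂ * z₃)) := by
  intro z₁ z₂ z₃ h1 h2 h3
  have hωω1 : ω * (starRingEnd ℂ) ω = 1 := by
    rw [Complex.mul_conj, Complex.normSq_eq_norm_sq, hω]; norm_num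
  have hνν1 : ν * (starRingEnd ℂ) ν = 1 := by
    rw [Complex.mul_conj, Complex.normSq_eq_norm_sq, hν]; norm_num
  have hd1 : 1 + ν * (1 - (s : ℂ)) * z₁ + ν * (s : ℂ) * z₂ ≠ 0 :=
    magic_den_ne s hs ν z₁ z₂ hν h1 h2
  have hXlt : ‖magic s ν z₁ z₂‖ < 1 := magic_lt s hs ν z₁ z₂ hν h1 h2
  have hd2 : 1 + ω * (1 - (t : ℂ)) * magic s ν z₁ z₂ + ω * (t : ℂ) * z₃ ≠ 0 :=
    magic_den_ne t ht ω (magic s ν z₁ z₂) z₃ hω hXlt h3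
  have hXd : magic s ν z₁ z₂ * (1 + ν * (1 - (s : ℂ)) * z₁ + ν * (s : ℂ) * z₂)
      = (s : ℂ) * z₁ + (1 - (s : ℂ)) * z₂ + ν * z₁ * z₂ := by
    rw [show magic s ν z₁ z₂ = ((s : ℂ) * z₁ + (1 - (s : ℂ)) * z₂ + ν * z₁ * z₂) /
        (1 + ν * (1 - (s : ℂ)) * z₁ + ν * (s : ℂ) * z₂) from rfl, div_mul_cancel₀ _ hd1]
  have hpoly : 1 + ω * ν * ((starRingEnd ℂ) F * z₁ + (starRingEnd ℂ) E * z₂ +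
        (starRingEnd ℂ) D * z₃ + C * z₁ * z₂ + B * z₁ * z₃ + A * z₂ * z₃)
      = (1 + ν * (1 - (s : ℂ)) * z₁ + ν * (s : ℂ) * z₂)
        + ω * (1 - (t : ℂ)) * ((s : ℂ) * z₁ + (1 - (s : ℂ)) * z₂ + ν * z₁ * z₂)
        + ω * (t : ℂ) * z₃ * (1 + ν * (1 - (s : ℂ)) * z₁ + ν * (s : ℂ) * z₂) := by
    subst hA hB hC hD hE hF
    simp only [map_add, map_mul, map_sub, map_one, Complex.conj_ofReal]
    linear_combination (ω * (s : ℂ) * (1 - (t : ℂ)) * z₁ + ω * (1 - (s : ℂ)) * (1 - (t : ℂ)) * z₂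
        + ω * (t : ℂ) * z₃) * hνν1
      + (ν * (1 - (s : ℂ)) * z₁ + ν * (s : ℂ) * z₂) * hωω1
  have hden3eq : 1 + ω * ν * ((starRingEnd ℂ) F * z₁ + (starRingEnd ℂ) E * z₂ +
        (starRingEnd ℂ) D * z₃ + C * z₁ * z₂ + B * z₁ * z₃ + A * z₂ * z₃)
      = (1 + ν * (1 - (s : ℂ)) * z₁ + ν * (s : ℂ) * z₂) *
        (1 + ω * (1 - (t : ℂ)) * magic s ν z₁ z₂ + ω * (t : ℂ) * z₃) := by
    rw [hpoly]; linear_combination (-(ω * (1 - (t : ℂ)))) * hXd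
  have hd3 : 1 + ω * ν * ((starRingEnd ℂ) F * z₁ + (starRingEnd ℂ) E * z₂ +
        (starRingEnd ℂ) D * z₃ + C * z₁ * z₂ + B * z₁ * z₃ + A * z₂ * z₃) ≠ 0 := by
    rw [hden3eq]; exact mul_ne_zero hd1 hd2
  refine ⟨hd1, hd2, hd3, ?_⟩
  have hnum : (t : ℂ) * ((s : ℂ) * z₁ + (1 - (s : ℂ)) * z₂ + ν * z₁ * z₂)
      + (1 - (t : ℂ)) * z₃ * (1 + ν * (1 - (s : ℂ)) * z₁ + ν * (s : ℂ) * z₂)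
      + ω * ((s : ℂ) * z₁ + (1 - (s : ℂ)) * z₂ + ν * z₁ * z₂) * z₃
      = A * z₁ + B * z₂ + C * z₃ + D * z₁ * z₂ + E * z₁ * z₃ + F * z₂ * z₃ +
          ω * ν * z₁ * z₂ * z₃ := by
    subst hA hB hC hD hE hF; ring
  rw [show magic t ω (magic s ν z₁ z₂) z₃ =
      ((t : ℂ) * magic s ν z₁ z₂ + (1 - (t : ℂ)) * z₃ + ω * magic s ν z₁ z₂ * z₃) /
        (1 + ω * (1 - (t : ℂ)) * magic s ν z₁ z₂ + ω * (t : ℂ) * z₃) from rfl]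
  rw [div_eq_div_iff hd2 hd3, hden3eq]
  linear_combination ((1 + ω * (1 - (t : ℂ)) * magic s ν z₁ z₂ + ω * (t : ℂ) * z₃) *
      (((t : ℂ) + ω * z₃) * hXd + hnum))
end

section
/- For all complex numbers z, w one has |z + w − zw|² − |z + w − 1|² = 2·Re(z)·(1 − |w|²) + 2·Re(w)·(1 − |z|²) − (1 − |z|²|w|²). In particular, for z, w ∈ 𝔻 with 2·Re(z)·(1 − |w|²) + 2·Re(w)·(1 − |z|²) < 1 − |z|²|w|², one has z + w ≠ 1 and |(z + w − zw)/(z + w − 1)| < 1. -/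
open Complex

theorem abs_sq_identity_and_consequence :
    (∀ z w : ℂ,
      ‖z + w - z * w‖ ^ 2 - ‖z + w - 1‖ ^ 2 =
        2 * z.re * (1 - ‖w‖ ^ 2) + 2 * w.re * (1 - ‖z‖ ^ 2) -
          (1 - ‖z‖ ^ 2 * ‖w‖ ^ 2)) ∧
    (∀ z w : ℂ, ‖z‖ < 1 → ‖w‖ < 1 →
      2 * z.re * (1 - ‖w‖ ^ 2) + 2 * w.re * (1 - ‖z‖ ^ 2) <
        1 - ‖z‖ ^ 2 * ‖w‖ ^ 2 →
      z + w ≠ 1 ∧ ‖(z + w - z * w) / (z + w - 1)‖ < 1) := by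
  have key : ∀ z w : ℂ,
      ‖z + w - z * w‖ ^ 2 - ‖z + w - 1‖ ^ 2 =
        2 * z.re * (1 - ‖w‖ ^ 2) + 2 * w.re * (1 - ‖z‖ ^ 2) -
          (1 - ‖z‖ ^ 2 * ‖w‖ ^ 2) := by
    intro z w
    simp only [Complex.sq_norm, Complex.normSq_apply, Complex.sub_re, Complex.sub_im,
      Complex.add_re, Complex.add_im, Complex.mul_re, Complex.mul_im,
      Complex.one_re, Complex.one_im]
    ring
  refine ⟨key, fun z w hz hw hlt => ?_⟩
  have h := key z w
  have hneq : z + w ≠ 1 := by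
    intro h1
    have : z + w - 1 = 0 := by rw [h1]; ring
    rw [this] at h
    simp at h
    nlinarith [sq_nonneg ‖z + w - z * w‖, norm_nonneg (z + w - z * w)]
  refine ⟨hneq, ?_⟩
  have hne0 : z + w - 1 ≠ 0 := sub_ne_zero.mpr hneq
  have hpos : 0 < ‖z + w - 1‖ := by
    simpa using (norm_pos_iff.mpr hne0)
  rw [norm_div, div_lt_one hpos]
  nlinarith [norm_nonneg (z + w - z * w)]
end

section
/- Let ζ₂ ∈ ℂ with |ζ₂| = 1 and Re(ζ₂) ≤ 1/2. Then for every z ∈ 𝔻 one has z + ζ₂ ≠ 1, and the point ξ(z,ζ₂) = (z, ζ₂, (z + ζ₂ − zζ₂)/(z + ζ₂ − 1)) belongs to the closure of M_{(1,1,1)} in ℂ³ but not to M_{(1,1,1)} itself; in particular the analytic disc z ↦ ξ(z,ζ₂) maps 𝔻 into the topological boundary of M_{(1,1,1)}. -/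
open Complex Set Filter Topology

lemma normSq_key (a b : ℂ) :
    Complex.normSq (a + b - a*b) - Complex.normSq (a + b - 1) =
      (1 - Complex.normSq a)*(1 - Complex.normSq b)
        - (1 - Complex.normSq a)*(1 - 2*b.re)
        - (1 - Complex.normSq b)*(1 - 2*a.re) := by
  simp only [Complex.normSq_apply, Complex.sub_re, Complex.sub_im, Complex.add_re,
    Complex.add_im, Complex.mul_re, Complex.mul_im, Complex.one_re, Complex.one_im]
  ring

lemma abs_lt_one_of_normSq_lt_one {w : ℂ} (h : Complex.normSq w < 1) : ‖w‖ < 1 := by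
  nlinarith [Complex.sq_norm w, norm_nonneg w]

lemma solveEq (a b : ℂ) (h : a + b - 1 ≠ 0) :
    a + b + (a + b - a*b)/(a + b - 1) =
      b*((a + b - a*b)/(a + b - 1)) + a*((a + b - a*b)/(a + b - 1)) + a*b := by
  field_simp
  ring

lemma b_normSq (ζ : ℂ) (hζ : Complex.normSq ζ = 1) (ε l : ℝ) :
    Complex.normSq (ζ * (1 - (ε:ℂ)*(1 + Complex.I*(l:ℂ)))) = 1 - 2*ε + ε^2*(1+l^2) := by
  rw [Complex.normSq_mul, hζ, one_mul]
  simp [Complex.normSq_apply]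
  ring

lemma b_re (ζ : ℂ) (ε l : ℝ) :
    (ζ * (1 - (ε:ℂ)*(1 + Complex.I*(l:ℂ)))).re = ζ.re*(1-ε) + ζ.im*(ε*l) := by
  simp [Complex.mul_re, Complex.mul_im]

set_option maxHeartbeats 1600000 in
theorem analytic_disc_in_boundary_of_M111
    (ζ₂ : ℂ) (h₂ : ‖ζ₂‖ = 1) (hre : ζ₂.re ≤ 1 / 2) :
    ∀ z : ℂ, ‖z‖ < 1 →
      z + ζ₂ ≠ 1 ∧
      (z, ζ₂, (z + ζ₂ - z * ζ₂) / (z + ζ₂ - 1)) ∈ closure (Mvar (1, 1, 1)) ∧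
      (z, ζ₂, (z + ζ₂ - z * ζ₂) / (z + ζ₂ - 1)) ∉ Mvar (1, 1, 1) := by
  intro z hz
  have hζsq : Complex.normSq ζ₂ = 1 := by rw [← Complex.sq_norm, h₂]; norm_num
  have hzsq : Complex.normSq z < 1 := by
    rw [← Complex.sq_norm]; nlinarith [norm_nonneg z]
  have hcd : ζ₂.re * ζ₂.re + ζ₂.im * ζ₂.im = 1 := by
    rw [← Complex.normSq_apply]; exact hζsq
  -- Part 1
  have hne : z + ζ₂ ≠ 1 := by
    intro h
    have hz1 : z = 1 - ζ₂ := by linear_combination h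
    have h1 : Complex.normSq z = 2 - 2*ζ₂.re := by
      rw [hz1]
      simp [Complex.normSq_apply]
      nlinarith [hcd]
    nlinarith [hzsq]
  have hD : z + ζ₂ - 1 ≠ 0 := sub_ne_zero.mpr hne
  refine ⟨hne, ?_, ?_⟩
  · -- closure part
    have hP : 0 < 1 - Complex.normSq z := by linarith
    obtain ⟨L, hPL⟩ : ∃ L : ℝ,
        (1 - Complex.normSq z)*L = 2*z.re - Complex.normSq z + (1 - Complex.normSq z) :=
      ⟨(2*z.re - Complex.normSq z)/(1 - Complex.normSq z) + 1, by field_simp⟩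
    -- choose the direction l and a threshold for the real-part estimate
    obtain ⟨l, ε₁, hε₁, hlow⟩ : ∃ l : ℝ, ∃ ε₁ : ℝ, 0 < ε₁ ∧ ∀ ε : ℝ, 0 < ε → ε < ε₁ →
        2*ε*L ≤ 1 - 2*(ζ₂.re*(1-ε) + ζ₂.im*(ε*l)) := by
      by_cases hd : ζ₂.im = 0
      · refine ⟨0, 1/(2*|L|+2), by positivity, fun ε hε hε' => ?_⟩
        have hc : ζ₂.re = -1 := by
          rcases mul_self_eq_one_iff.mp (by nlinarith : ζ₂.re * ζ₂.re = 1) with h | h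
          · linarith
          · exact h
        have hεL : ε*(2*|L|+2) < 1 := by
          rw [← lt_div_iff₀ (by positivity)]
          exact hε'
        rw [hc, hd]
        nlinarith [le_abs_self L, abs_nonneg L]
      · refine ⟨(ζ₂.re - L)/ζ₂.im, 1, one_pos, fun ε hε _ => ?_⟩
        have hdl : ζ₂.im * ((ζ₂.re - L)/ζ₂.im) = ζ₂.re - L := by field_simp
        nlinarith [hdl]
    have hl2 : (0:ℝ) < 1 + l^2 := by positivity
    set b : ℝ → ℂ := fun ε => ζ₂ * (1 - (ε:ℂ)*(1 + Complex.I*(l:ℂ))) with hbdef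
    have hbc : Continuous b := by rw [hbdef]; fun_prop
    have hb0 : Tendsto b (𝓝[>] (0:ℝ)) (𝓝 ζ₂) :=
      (hbc.tendsto' 0 ζ₂ (by simp [hbdef])).mono_left nhdsWithin_le_nhds
    have hDt : Tendsto (fun ε => z + b ε - 1) (𝓝[>] (0:ℝ)) (𝓝 (z + ζ₂ - 1)) :=
      (tendsto_const_nhds.add hb0).sub tendsto_const_nhds
    have hNt : Tendsto (fun ε => z + b ε - z * b ε) (𝓝[>] (0:ℝ)) (𝓝 (z + ζ₂ - z*ζ₂)) :=
      (tendsto_const_nhds.add hb0).sub (tendsto_const_nhds.mul hb0)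
    have hwt : Tendsto (fun ε => (z + b ε - z * b ε)/(z + b ε - 1)) (𝓝[>] (0:ℝ))
        (𝓝 ((z + ζ₂ - z*ζ₂)/(z + ζ₂ - 1))) := hNt.div hDt hD
    have hft : Tendsto (fun ε => (z, b ε, (z + b ε - z * b ε)/(z + b ε - 1))) (𝓝[>] (0:ℝ))
        (𝓝 (z, ζ₂, (z + ζ₂ - z*ζ₂)/(z + ζ₂ - 1))) :=
      tendsto_const_nhds.prodMk_nhds (hb0.prodMk_nhds hwt)
    have hε₀ : 0 < min (min ε₁ (2/(1+l^2))) (2*(1 - Complex.normSq z)/(3*(1+l^2))) :=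
      lt_min (lt_min hε₁ (by positivity)) (by positivity)
    have hev : ∀ᶠ ε in 𝓝[>] (0:ℝ),
        (z, b ε, (z + b ε - z * b ε)/(z + b ε - 1)) ∈ Mvar (1,1,1) := by
      filter_upwards [Ioo_mem_nhdsGT_of_mem (show (0:ℝ) ∈ Ico 0 _ from ⟨le_refl 0, hε₀⟩),
        hDt.eventually_ne hD] with ε hει hDne
      obtain ⟨hεpos, hεlt⟩ := hει
      have hε2 : ε*(1+l^2) < 2 := by
        have := lt_of_lt_of_le hεlt (le_trans (min_le_left _ _) (min_le_right _ _))
        rw [lt_div_iff₀ hl2] at this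
        linarith
      have hε3 : ε*(3*(1+l^2)) < 2*(1 - Complex.normSq z) := by
        have := lt_of_lt_of_le hεlt (min_le_right _ _)
        rw [lt_div_iff₀ (by positivity)] at this
        linarith
      have hεε₁ : ε < ε₁ := lt_of_lt_of_le hεlt (le_trans (min_le_left _ _) (min_le_left _ _))
      have hB : Complex.normSq (b ε) = 1 - 2*ε + ε^2*(1+l^2) := b_normSq ζ₂ hζsq ε l
      have hBlt : Complex.normSq (b ε) < 1 := by rw [hB]; nlinarith
      have hv : 2*ε*L ≤ 1 - 2*(b ε).re := by
        rw [hbdef]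
        simp only []
        rw [b_re ζ₂ ε l]
        exact hlow ε hεpos hεε₁
      have hx2 : z.re*z.re ≤ Complex.normSq z := by
        rw [Complex.normSq_apply]; nlinarith [mul_self_nonneg z.im]
      have hx1 : -1 < z.re := by nlinarith
      have hkey := normSq_key z (b ε)
      have hQ : 1 - Complex.normSq (b ε) = 2*ε - ε^2*(1+l^2) := by rw [hB]; ring
      have hmono := mul_le_mul_of_nonneg_left hv hP.le
      have hdiff : Complex.normSq (z + b ε - z * b ε) - Complex.normSq (z + b ε - 1)
          ≤ ε^2*(1+l^2)*(Complex.normSq z - 2*z.re) - 2*ε*(1 - Complex.normSq z) := by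
        calc Complex.normSq (z + b ε - z * b ε) - Complex.normSq (z + b ε - 1)
            = (1 - Complex.normSq z)*(1-Complex.normSq (b ε))
              - (1 - Complex.normSq z)*(1-2*(b ε).re)
              - (1-Complex.normSq (b ε))*(1-2*z.re) := hkey
          _ ≤ (1 - Complex.normSq z)*(1-Complex.normSq (b ε))
              - (1 - Complex.normSq z)*(2*ε*L)
              - (1-Complex.normSq (b ε))*(1-2*z.re) := by linarith
          _ = ε^2*(1+l^2)*(Complex.normSq z - 2*z.re) - 2*ε*(1 - Complex.normSq z) := by
              linear_combination (2*z.re - Complex.normSq z) * hQ - 2*ε*hPL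
      have hE : ε^2*(1+l^2)*(Complex.normSq z - 2*z.re) - 2*ε*(1 - Complex.normSq z) < 0 := by
        nlinarith [mul_lt_mul_of_pos_left hε3 hεpos,
          mul_nonneg (mul_nonneg (sq_nonneg ε) hl2.le)
            (show (0:ℝ) ≤ 3 - (Complex.normSq z - 2*z.re) by nlinarith)]
      have hlt : Complex.normSq (z + b ε - z * b ε) < Complex.normSq (z + b ε - 1) := by
        linarith
      refine ⟨⟨hz, abs_lt_one_of_normSq_lt_one hBlt, ?_⟩, ?_⟩
      · apply abs_lt_one_of_normSq_lt_one
        rw [Complex.normSq_div, div_lt_one (Complex.normSq_pos.mpr hDne)]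
        exact hlt
      · simp only [map_one, one_mul]
        exact solveEq z (b ε) hDne
    exact mem_closure_of_tendsto hft hev
  · -- not in Mvar
    rintro ⟨⟨-, h2, -⟩, -⟩
    rw [h₂] at h2
    exact lt_irrefl 1 h2
end

section
/- For every α = (α₁,α₂,α₃) ∈ ℂ³ satisfying the triangle inequality, the set clos(M_α) ∩ 𝕋³ is non-empty, where clos(M_α) is the closure of M_α in ℂ³ and 𝕋³ = {(z₁,z₂,z₃) ∈ ℂ³ : |z₁| = |z₂| = |z₃| = 1} is the three-torus. -/
open Complex Set

/-- The three-torus `𝕋³ ⊆ ℂ³`. -/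
def triTorus : Set (ℂ × ℂ × ℂ) :=
  {z | ‖z.1‖ = 1 ∧ ‖z.2.1‖ = 1 ∧ ‖z.2.2‖ = 1}

theorem closure_M_alpha_inter_torus_nonempty
    (α : ℂ × ℂ × ℂ) (hα : TriangleIneq α) :
    (closure (Mvar α) ∩ triTorus).Nonempty := by
  obtain ⟨h3, h1, h2⟩ := hα
  set b1 := ‖α.1‖ with hb1def
  set b2 := ‖α.2.1‖ with hb2def
  set b3 := ‖α.2.2‖ with hb3def
  have hnn1 : 0 ≤ b1 := norm_nonneg _
  have hnn2 : 0 ≤ b2 := norm_nonneg _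
  have hnn3 : 0 ≤ b3 := norm_nonneg _
  have hb1 : 0 < b1 := by linarith
  have hb2 : 0 < b2 := by linarith
  have hb3 : 0 < b3 := by linarith
  set c : ℝ := (b3 ^ 2 - b1 ^ 2 - b2 ^ 2) / (2 * b1 * b2) with hcdef
  have hc' : 2 * b1 * b2 * c = b3 ^ 2 - b1 ^ 2 - b2 ^ 2 := by
    rw [hcdef]; field_simp
  have hc2 : c ^ 2 < 1 := by
    rw [hcdef, div_pow, div_lt_one (by positivity)]
    nlinarith [mul_pos (mul_pos (mul_pos (show (0:ℝ) < b1 + b2 - b3 by linarith)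
      (show (0:ℝ) < b1 + b2 + b3 by linarith)) (show (0:ℝ) < b3 - b1 + b2 by linarith))
      (show (0:ℝ) < b3 + b1 - b2 by linarith)]
  have hs : Real.sqrt (1 - c ^ 2) ^ 2 = 1 - c ^ 2 := Real.sq_sqrt (by linarith)
  set v2 : ℂ := (c : ℂ) + (Real.sqrt (1 - c ^ 2) : ℂ) * I with hv2def
  have hnv2 : Complex.normSq v2 = 1 := by
    rw [hv2def, Complex.normSq_add_mul_I]
    rw [hs]; ring
  have habsv2 : ‖v2‖ = 1 := by
    rw [Complex.norm_def, hnv2, Real.sqrt_one]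
  have key : Complex.normSq ((b1 : ℂ) + (b2 : ℂ) * v2) = b3 ^ 2 := by
    have : ((b1 : ℂ) + (b2 : ℂ) * v2) = ((b1 + b2 * c : ℝ) : ℂ) +
        ((b2 * Real.sqrt (1 - c ^ 2) : ℝ) : ℂ) * I := by
      rw [hv2def]; push_cast; ring
    rw [this, Complex.normSq_add_mul_I]
    nlinarith [hs, hc']
  have habsx : ‖(b1 : ℂ) + (b2 : ℂ) * v2‖ = b3 := by
    rw [Complex.norm_def, key, Real.sqrt_sq hb3.le]
  have hb1c : (b1 : ℂ) ≠ 0 := Complex.ofReal_ne_zero.mpr hb1.ne'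
  have hb2c : (b2 : ℂ) ≠ 0 := Complex.ofReal_ne_zero.mpr hb2.ne'
  have hb3c : (b3 : ℂ) ≠ 0 := Complex.ofReal_ne_zero.mpr hb3.ne'
  set v3 : ℂ := -(((b1 : ℂ) + (b2 : ℂ) * v2) / (b3 : ℂ)) with hv3def
  have habsv3 : ‖v3‖ = 1 := by
    rw [hv3def, norm_neg, norm_div, habsx, Complex.norm_real, Real.norm_eq_abs,
      abs_of_pos hb3, div_self hb3.ne']
  set u1 : ℂ := (starRingEnd ℂ) α.1 / (b1 : ℂ) with hu1def
  set u2 : ℂ := v2 * (starRingEnd ℂ) α.2.1 / (b2 : ℂ) with hu2def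
  set u3 : ℂ := v3 * (starRingEnd ℂ) α.2.2 / (b3 : ℂ) with hu3def
  have habsu1 : ‖u1‖ = 1 := by
    rw [hu1def, norm_div, Complex.norm_conj, Complex.norm_real, Real.norm_eq_abs, abs_of_pos hb1,
      ← hb1def, div_self hb1.ne']
  have habsu2 : ‖u2‖ = 1 := by
    rw [hu2def, norm_div, norm_mul, Complex.norm_conj, Complex.norm_real, Real.norm_eq_abs, abs_of_pos hb2,
      habsv2, ← hb2def, one_mul, div_self hb2.ne']
  have habsu3 : ‖u3‖ = 1 := by
    rw [hu3def, norm_div, norm_mul, Complex.norm_conj, Complex.norm_real, Real.norm_eq_abs, abs_of_pos hb3,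
      habsv3, ← hb3def, one_mul, div_self hb3.ne']
  have m1 : α.1 * (starRingEnd ℂ) α.1 = (b1 : ℂ) ^ 2 := by
    rw [Complex.mul_conj, Complex.normSq_eq_norm_sq, ← hb1def]; push_cast; ring
  have m2 : α.2.1 * (starRingEnd ℂ) α.2.1 = (b2 : ℂ) ^ 2 := by
    rw [Complex.mul_conj, Complex.normSq_eq_norm_sq, ← hb2def]; push_cast; ring
  have m3 : α.2.2 * (starRingEnd ℂ) α.2.2 = (b3 : ℂ) ^ 2 := by
    rw [Complex.mul_conj, Complex.normSq_eq_norm_sq, ← hb3def]; push_cast; ring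
  have e1 : α.1 * u1 = (b1 : ℂ) := by
    rw [hu1def]; field_simp; linear_combination m1
  have e2 : α.2.1 * u2 = (b2 : ℂ) * v2 := by
    rw [hu2def]; field_simp; linear_combination v2 * m2
  have e3 : α.2.2 * u3 = (b3 : ℂ) * v3 := by
    rw [hu3def]; field_simp; linear_combination v3 * m3
  have e4 : (b3 : ℂ) * v3 = -((b1 : ℂ) + (b2 : ℂ) * v2) := by
    rw [hv3def]; field_simp
  have hsum : α.1 * u1 + α.2.1 * u2 + α.2.2 * u3 = 0 := by
    rw [e1, e2, e3, e4]; ring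
  have mul_conj_one : ∀ u : ℂ, ‖u‖ = 1 → u * (starRingEnd ℂ) u = 1 := by
    intro u hu
    rw [Complex.mul_conj, Complex.normSq_eq_norm_sq, hu]; norm_num
  have huc1 := mul_conj_one u1 habsu1
  have huc2 := mul_conj_one u2 habsu2
  have huc3 := mul_conj_one u3 habsu3
  have hconj : (starRingEnd ℂ) α.1 * (starRingEnd ℂ) u1 + (starRingEnd ℂ) α.2.1 * (starRingEnd ℂ) u2
      + (starRingEnd ℂ) α.2.2 * (starRingEnd ℂ) u3 = 0 := by
    have := congrArg (starRingEnd ℂ) hsum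
    simpa [map_add, map_mul] using this
  clear_value v2 v3 u1 u2 u3
  have hS : (starRingEnd ℂ) α.1 * u2 * u3 + (starRingEnd ℂ) α.2.1 * u1 * u3 +
      (starRingEnd ℂ) α.2.2 * u1 * u2 = 0 := by
    linear_combination u1 * u2 * u3 * hconj - (starRingEnd ℂ) α.1 * u2 * u3 * huc1 -
      (starRingEnd ℂ) α.2.1 * u1 * u3 * huc2 - (starRingEnd ℂ) α.2.2 * u1 * u2 * huc3
  have hkey : ∀ r : ℝ, r ∈ Ioo (0:ℝ) 1 →
      ((r : ℂ) * u1, (r : ℂ) * u2, (r : ℂ) * u3) ∈ Mvar α := by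
    intro r hr
    constructor
    · refine ⟨?_, ?_, ?_⟩ <;>
      · simp only [norm_mul, Complex.norm_real, Real.norm_eq_abs, habsu1, habsu2, habsu3, mul_one,
          abs_of_pos hr.1]
        exact hr.2
    · linear_combination (r : ℂ) * hsum - (r : ℂ) ^ 2 * hS
  have hcont : Continuous (fun r : ℝ => ((r : ℂ) * u1, (r : ℂ) * u2, (r : ℂ) * u3)) := by
    fun_prop
  have htend : Filter.Tendsto (fun r : ℝ => ((r : ℂ) * u1, (r : ℂ) * u2, (r : ℂ) * u3))
      (nhdsWithin 1 (Ioo (0:ℝ) 1)) (nhds (u1, u2, u3)) := by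
    have h0 : Filter.Tendsto (fun r : ℝ => ((r : ℂ) * u1, (r : ℂ) * u2, (r : ℂ) * u3))
        (nhds 1) (nhds (u1, u2, u3)) := by
      have := hcont.tendsto 1
      simpa using this
    exact h0.mono_left nhdsWithin_le_nhds
  haveI : (nhdsWithin (1:ℝ) (Ioo (0:ℝ) 1)).NeBot :=
    right_nhdsWithin_Ioo_neBot (show (0:ℝ) < 1 by norm_num)
  have hcl : (u1, u2, u3) ∈ closure (Mvar α) :=
    mem_closure_of_tendsto htend (eventually_mem_nhdsWithin.mono fun r hr => hkey r hr)
  exact ⟨(u1, u2, u3), hcl, habsu1, habsu2, habsu3⟩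
end

section
/- Let α = (α₁,α₂,α₃) ∈ ℂ³ satisfy the triangle inequality and let ζ ∈ clos(M_α) ∩ 𝕋³. Then ζ is a peak point: there exists a function f : clos(M_α) → ℂ, continuous on clos(M_α) and holomorphic on M_α (indeed the restriction of an entire function on ℂ³), such that f(ζ) = 1 and |f(w)| < 1 for every w ∈ clos(M_α) with w ≠ ζ. -/
open Complex Set

lemma peak_factor_le (u z : ℂ) (hu : ‖u‖ = 1) (hz : ‖z‖ ≤ 1) :
    ‖(1 + (starRingEnd ℂ) u * z) / 2‖ ≤ 1 := by
  rw [norm_div]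
  have habs : ‖(starRingEnd ℂ) u * z‖ ≤ 1 := by
    rw [norm_mul, Complex.norm_conj, hu, one_mul]; exact hz
  have h1 : ‖1 + (starRingEnd ℂ) u * z‖ ≤
      ‖(1 : ℂ)‖ + ‖(starRingEnd ℂ) u * z‖ := norm_add_le _ _
  simp only [norm_one] at h1
  have h2 : ‖(2 : ℂ)‖ = 2 := by norm_num
  rw [h2]
  rw [div_le_one (by norm_num : (0:ℝ) < 2)]
  linarith

lemma peak_factor_lt (u z : ℂ) (hu : ‖u‖ = 1) (hz : ‖z‖ ≤ 1)
    (hne : z ≠ u) : ‖(1 + (starRingEnd ℂ) u * z) / 2‖ < 1 := by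
  obtain ⟨w, hw⟩ : ∃ w, w = (starRingEnd ℂ) u * z := ⟨_, rfl⟩
  rw [← hw]
  have hwabs : ‖w‖ ≤ 1 := by
    rw [hw, norm_mul, Complex.norm_conj, hu, one_mul]; exact hz
  have hwne : w ≠ 1 := by
    intro h
    apply hne
    have hn : Complex.normSq u = 1 := by
      rw [← Complex.sq_norm, hu]; norm_num
    have h2 : u * ((starRingEnd ℂ) u * z) = u * 1 := by rw [← hw, h]
    rw [← mul_assoc, Complex.mul_conj, mul_one, hn] at h2
    simpa using h2
  -- show abs (1 + w) < 2
  have key : ‖1 + w‖ < 2 := by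
    have hsq : ‖1 + w‖ ^ 2 = (1 + w.re) ^ 2 + w.im ^ 2 := by
      rw [Complex.sq_norm, Complex.normSq_apply]
      simp only [Complex.add_re, Complex.add_im, Complex.one_re, Complex.one_im]
      ring
    have hns : w.re ^ 2 + w.im ^ 2 ≤ 1 := by
      have := Complex.sq_norm w
      rw [Complex.normSq_apply] at this
      nlinarith [norm_nonneg w]
    have hre : w.re ≤ 1 := le_trans (Complex.re_le_norm w) hwabs
    rcases lt_or_eq_of_le hre with h | h
    · have h4 : ‖1 + w‖ ^ 2 < 4 := by rw [hsq]; nlinarith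
      nlinarith [norm_nonneg (1 + w)]
    · exfalso
      have him : w.im = 0 := by nlinarith
      exact hwne (Complex.ext (by simpa using h) (by simpa using him))
  rw [norm_div]
  have h2 : ‖(2 : ℂ)‖ = 2 := by norm_num
  rw [h2]
  rw [div_lt_one (by norm_num : (0:ℝ) < 2)]
  exact key

theorem torus_points_are_peak_points
    (α : ℂ × ℂ × ℂ) (hα : TriangleIneq α)
    (ζ : ℂ × ℂ × ℂ) (hζ : ζ ∈ closure (Mvar α) ∩ triTorus) :
    ∃ f : ℂ × ℂ × ℂ → ℂ, Differentiable ℂ f ∧ f ζ = 1 ∧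
      ∀ w ∈ closure (Mvar α), w ≠ ζ → ‖f w‖ < 1 := by
  obtain ⟨hζM, hζ1, hζ2, hζ3⟩ := hζ
  refine ⟨fun z => ((1 + (starRingEnd ℂ) ζ.1 * z.1) / 2) *
      (((1 + (starRingEnd ℂ) ζ.2.1 * z.2.1) / 2) *
       ((1 + (starRingEnd ℂ) ζ.2.2 * z.2.2) / 2)), ?_, ?_, ?_⟩
  · fun_prop
  · have e1 : (starRingEnd ℂ) ζ.1 * ζ.1 = 1 := by
      rw [mul_comm, Complex.mul_conj]
      norm_cast
      rw [← Complex.sq_norm, hζ1]; norm_num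
    have e2 : (starRingEnd ℂ) ζ.2.1 * ζ.2.1 = 1 := by
      rw [mul_comm, Complex.mul_conj]
      norm_cast
      rw [← Complex.sq_norm, hζ2]; norm_num
    have e3 : (starRingEnd ℂ) ζ.2.2 * ζ.2.2 = 1 := by
      rw [mul_comm, Complex.mul_conj]
      norm_cast
      rw [← Complex.sq_norm, hζ3]; norm_num
    simp only [e1, e2, e3]
    norm_num
  · intro w hw hne
    -- w is in the closed tridisc
    have hsub : closure (Mvar α) ⊆
        {z : ℂ × ℂ × ℂ | ‖z.1‖ ≤ 1 ∧ ‖z.2.1‖ ≤ 1 ∧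
          ‖z.2.2‖ ≤ 1} := by
      apply closure_minimal
      · intro z hz
        obtain ⟨⟨h1, h2, h3⟩, -⟩ := hz
        exact ⟨h1.le, h2.le, h3.le⟩
      · refine IsClosed.inter ?_ (IsClosed.inter ?_ ?_)
        · exact isClosed_le (continuous_norm.comp continuous_fst) continuous_const
        · exact isClosed_le (continuous_norm.comp (continuous_snd.fst)) continuous_const
        · exact isClosed_le (continuous_norm.comp (continuous_snd.snd)) continuous_const
    obtain ⟨hw1, hw2, hw3⟩ := hsub hw
    have L1 := peak_factor_le ζ.1 w.1 hζ1 hw1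
    have L2 := peak_factor_le ζ.2.1 w.2.1 hζ2 hw2
    have L3 := peak_factor_le ζ.2.2 w.2.2 hζ3 hw3
    have hdiff : w.1 ≠ ζ.1 ∨ w.2.1 ≠ ζ.2.1 ∨ w.2.2 ≠ ζ.2.2 := by
      by_contra h
      push_neg at h
      exact hne (Prod.ext h.1 (Prod.ext h.2.1 h.2.2))
    rw [norm_mul, norm_mul]
    have n1 := norm_nonneg ((1 + (starRingEnd ℂ) ζ.1 * w.1) / 2)
    have n2 := norm_nonneg ((1 + (starRingEnd ℂ) ζ.2.1 * w.2.1) / 2)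
    have n3 := norm_nonneg ((1 + (starRingEnd ℂ) ζ.2.2 * w.2.2) / 2)
    rcases hdiff with h | h | h
    · have S := peak_factor_lt ζ.1 w.1 hζ1 hw1 h
      nlinarith [mul_nonneg n2 n3, mul_le_one₀ L2 n3 L3]
    · have S := peak_factor_lt ζ.2.1 w.2.1 hζ2 hw2 h
      nlinarith [mul_nonneg n2 n3, mul_le_one₀ L2 n3 L3]
    · have S := peak_factor_lt ζ.2.2 w.2.2 hζ3 hw3 h
      nlinarith [mul_nonneg n2 n3, mul_le_one₀ L2 n3 L3]
end
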